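/- (Two-weight inequality for the dual Hardy operator, Theorem 8.) Let p, q : (0, ∞) → ℝ be measurable with 0 < p̲ := ess inf p ≤ p(x) ≤ q(x) ≤ ess sup q =: q̄ < 1 a.e., let r(x) = p̲ p(x)/(p(x) − p̲) (interpreted via the L_∞-norm on the set S₁ = {x : p(x) = p̲}), and let ω₁, ω₂ be weights on (0, ∞). Then there exists a constant C > 0, depending only on p̲, p̄ := ess sup p, q̲ := ess inf q, q̄ and the sets where the exponents coincide, such that for every nonnegative decreasing f ∈ L_{p(x),ω₁}(0, ∞): ‖H*f‖_{q,ω₂,(0,∞)} ≤ C · ‖ t ↦ ‖x ↦ (t − x)^{(p̲−1)/p̲} ω₂(x)/x‖_{q,(0,t)} / ω₁(t) ‖_{r,(0,∞)} · ‖f‖_{p,ω₁,(0,∞)}. -/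

import Mathlib

open MeasureTheory ENNReal Set

/-- The modular `∫_E (|g(x)| ω(x))^{s(x)} dx` on a subset of `(0,∞)`. -/
noncomputable def IpwR (E : Set ℝ) (s ω : ℝ → ℝ) (g : ℝ → ℝ) : ℝ≥0∞ :=
  ∫⁻ x in E, ENNReal.ofReal (|g x| * ω x) ^ s x

/-- The quasi-norm `inf {λ > 0 : ∫_E (g(x)/λ)^{s(x)} dx ≤ 1}` for an
`[0,∞]`-valued integrand `g` (for a real `f` with weight `ω`, take
`g x = ENNReal.ofReal (|f x| * ω x)`). -/
noncomputable def NE (E : Set ℝ) (s : ℝ → ℝ) (g : ℝ → ℝ≥0∞) : ℝ≥0∞ :=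
  sInf {lam : ℝ≥0∞ | 0 < lam ∧ ∫⁻ x in E, (g x / lam) ^ s x ≤ 1}

/-- `p̲ = ess inf` of the exponent over `(0,∞)`. -/
noncomputable def plow (p : ℝ → ℝ) : ℝ := essInf p (volume.restrict (Set.Ioi 0))

/-- The dual Hardy operator `H*f(x) = (1/x) ∫ₓ^∞ f(t) dt`, valued in `[0,∞]`. -/
noncomputable def HopDual (f : ℝ → ℝ) (x : ℝ) : ℝ≥0∞ :=
  (∫⁻ t in Set.Ioi x, ENNReal.ofReal (f t)) / ENNReal.ofReal x

/-- The function `t ↦ ‖x ↦ (t-x)^{(p̲-1)/p̲} ω₂(x)/x‖_{q,(0,t)} / ω₁(t)`. -/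
noncomputable def dualHardyWeight (p q ω₁ ω₂ : ℝ → ℝ) (t : ℝ) : ℝ≥0∞ :=
  NE (Set.Ioo 0 t) q
      (fun x => ENNReal.ofReal ((t - x) ^ ((plow p - 1) / plow p) * ω₂ x / x)) /
    ENNReal.ofReal (ω₁ t)

/-- The norm `‖dualHardyWeight‖_{r,(0,∞)}` with `r(x) = p̲ p(x)/(p(x) - p̲)`,
interpreted via the `L_∞`-norm on `S₁ = {x : p(x) = p̲}`. -/
noncomputable def dualHardyWeightNorm (p q ω₁ ω₂ : ℝ → ℝ) : ℝ≥0∞ :=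
  NE {x ∈ Set.Ioi (0 : ℝ) | plow p < p x}
      (fun x => plow p * p x / (p x - plow p)) (dualHardyWeight p q ω₁ ω₂) +
    essSup (dualHardyWeight p q ω₁ ω₂)
      (volume.restrict {x ∈ Set.Ioi (0 : ℝ) | p x = plow p})

/-! ### Basic lemmas about the quasi-norm `NE` -/

lemma NE_le_of_mem {E : Set ℝ} {s : ℝ → ℝ} {g : ℝ → ℝ≥0∞} {lam : ℝ≥0∞}
    (h0 : 0 < lam) (h : ∫⁻ x in E, (g x / lam) ^ s x ≤ 1) : NE E s g ≤ lam :=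
  sInf_le ⟨h0, h⟩

lemma modular_le_one_of_NE_lt {E : Set ℝ} {s : ℝ → ℝ} {g : ℝ → ℝ≥0∞} {lam : ℝ≥0∞}
    (hs : ∀ᵐ x ∂(volume.restrict E), 0 ≤ s x)
    (h : NE E s g < lam) : ∫⁻ x in E, (g x / lam) ^ s x ≤ 1 := by
  obtain ⟨μ, hμmem, hμlt⟩ := sInf_lt_iff.mp h
  refine le_trans (lintegral_mono_ae ?_) hμmem.2
  filter_upwards [hs] with x hx
  exact ENNReal.rpow_le_rpow (ENNReal.div_le_div_left hμlt.le _) hx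

/-! ### rpow helpers -/

lemma rpow_rpow_inv (x : ℝ≥0∞) {c : ℝ} (hc : c ≠ 0) : (x ^ c) ^ c⁻¹ = x := by
  rw [← ENNReal.rpow_mul, mul_inv_cancel₀ hc, ENNReal.rpow_one]

lemma rpow_inv_rpow (x : ℝ≥0∞) {c : ℝ} (hc : c ≠ 0) : (x ^ c⁻¹) ^ c = x := by
  rw [← ENNReal.rpow_mul, inv_mul_cancel₀ hc, ENNReal.rpow_one]

lemma rpow_le_rpow_of_nonpos {x y : ℝ≥0∞} {c : ℝ} (hxy : x ≤ y) (hc : c ≤ 0) :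
    y ^ c ≤ x ^ c := by
  rcases eq_or_lt_of_le hc with h | h
  · subst h; simp
  · have : ∀ z : ℝ≥0∞, z ^ c = (z ^ (-c))⁻¹ := by
      intro z; rw [← ENNReal.rpow_neg, neg_neg]
    rw [this, this]
    exact ENNReal.inv_le_inv.mpr (ENNReal.rpow_le_rpow hxy (by linarith))

/-- Young's inequality in `ℝ≥0∞`, crude form. -/
lemma young_conj (a b : ℝ≥0∞) {u : ℝ} (hu : 1 < u) :
    a * b ≤ a ^ u + b ^ (u / (u - 1)) := by
  set u' : ℝ := u / (u - 1) with hu'def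
  have hu1 : (0:ℝ) < u - 1 := by linarith
  have hu0 : (0:ℝ) < u := by linarith
  have hu'pos : 0 < u' := div_pos hu0 hu1
  have h1 : u' / u = 1 / (u - 1) := by
    rw [hu'def]; field_simp
  have h2 : u' / u + 1 = u' := by
    rw [h1, hu'def]; field_simp; ring
  have h3 : u / u' = u - 1 := by
    rw [hu'def]
    rw [div_div_eq_mul_div, mul_comm, mul_div_assoc, div_self hu0.ne', mul_one]
  rcases le_total (a ^ u) (b ^ u') with h | h
  · have ha : a ≤ b ^ (u' / u) := by
      have := ENNReal.rpow_le_rpow h (by positivity : (0:ℝ) ≤ 1/u)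
      rwa [← ENNReal.rpow_mul, ← ENNReal.rpow_mul, mul_one_div, div_self hu0.ne',
        ENNReal.rpow_one, mul_one_div] at this
    rcases eq_or_ne b 0 with rfl | hb0
    · have : a ≤ 0 := by simpa [ENNReal.zero_rpow_of_pos (by positivity : (0:ℝ) < u'/u)] using ha
      simp [le_antisymm this zero_le]
    rcases eq_or_ne b ⊤ with rfl | hbt
    · calc a * ⊤ ≤ ⊤ := le_top
        _ = ⊤ ^ u' := (ENNReal.top_rpow_of_pos hu'pos).symm
        _ ≤ a ^ u + ⊤ ^ u' := self_le_add_left _ _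
    · calc a * b ≤ b ^ (u'/u) * b := mul_le_mul_left ha b
        _ = b ^ (u'/u) * b ^ (1:ℝ) := by rw [ENNReal.rpow_one]
        _ = b ^ (u'/u + 1) := (ENNReal.rpow_add _ _ hb0 hbt).symm
        _ = b ^ u' := by rw [h2]
        _ ≤ a ^ u + b ^ u' := self_le_add_left _ _
  · have hb : b ≤ a ^ (u / u') := by
      have := ENNReal.rpow_le_rpow h (by positivity : (0:ℝ) ≤ 1/u')
      rwa [← ENNReal.rpow_mul, ← ENNReal.rpow_mul, mul_one_div, div_self hu'pos.ne',
        ENNReal.rpow_one, mul_one_div] at this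
    rcases eq_or_ne a 0 with rfl | ha0
    · have : b ≤ 0 := by
        simpa [ENNReal.zero_rpow_of_pos (by rw [h3]; linarith : (0:ℝ) < u/u')] using hb
      simp [le_antisymm this zero_le]
    rcases eq_or_ne a ⊤ with rfl | hat
    · calc (⊤:ℝ≥0∞) * b ≤ ⊤ := le_top
        _ = ⊤ ^ u := (ENNReal.top_rpow_of_pos hu0).symm
        _ ≤ ⊤ ^ u + b ^ u' := le_self_add
    · calc a * b ≤ a * a ^ (u/u') := mul_le_mul_right hb a
        _ = a ^ (1:ℝ) * a ^ (u/u') := by rw [ENNReal.rpow_one]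
        _ = a ^ (1 + u/u') := (ENNReal.rpow_add _ _ ha0 hat).symm
        _ = a ^ u := by rw [h3]; ring_nf
        _ ≤ a ^ u + b ^ u' := le_self_add

/-- The key pointwise inequality for the Minkowski-type lemma:
`a * b^(θ-1) ≤ a^θ + b^θ` for `θ ≥ 1`, `b ≠ ∞` (with a degenerate-case side condition). -/
lemma mul_rpow_sub_one_le {a b : ℝ≥0∞} {θ : ℝ} (hθ : 1 ≤ θ) (hb : b ≠ ⊤)
    (hdeg : b = 0 → θ = 1 → a = 0) :
    a * b ^ (θ - 1) ≤ a ^ θ + b ^ θ := by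
  have hθ0 : (0:ℝ) < θ := by linarith
  rcases eq_or_ne b 0 with rfl | hb0
  · rcases eq_or_lt_of_le hθ with h1 | h1
    · rw [hdeg rfl h1.symm]; simp
    · rw [ENNReal.zero_rpow_of_pos (by linarith)]; simp
  rcases le_total a b with hab | hab
  · calc a * b ^ (θ-1) ≤ b * b ^ (θ-1) := mul_le_mul_left hab _
      _ = b ^ (1:ℝ) * b ^ (θ-1) := by rw [ENNReal.rpow_one]
      _ = b ^ (1 + (θ-1)) := (ENNReal.rpow_add _ _ hb0 hb).symm
      _ = b ^ θ := by ring_nf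
      _ ≤ a ^ θ + b ^ θ := self_le_add_left _ _
  · have ha0 : a ≠ 0 := fun h => hb0 (le_antisymm (h ▸ hab) zero_le)
    rcases eq_or_ne a ⊤ with rfl | hat
    · calc (⊤:ℝ≥0∞) * b ^ (θ-1) ≤ ⊤ := le_top
        _ = ⊤ ^ θ := (ENNReal.top_rpow_of_pos hθ0).symm
        _ ≤ ⊤ ^ θ + b ^ θ := le_self_add
    · calc a * b ^ (θ-1) ≤ a * a ^ (θ-1) :=
          mul_le_mul_right (ENNReal.rpow_le_rpow hab (by linarith)) a
        _ = a ^ (1:ℝ) * a ^ (θ-1) := by rw [ENNReal.rpow_one]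
        _ = a ^ (1 + (θ-1)) := (ENNReal.rpow_add _ _ ha0 hat).symm
        _ = a ^ θ := by ring_nf
        _ ≤ a ^ θ + b ^ θ := le_self_add

/-- Subadditivity of `x ↦ x^s`, `0 < s ≤ 1`, for countable sums in `ℝ≥0∞`. -/
lemma tsum_rpow_le {ι : Type*} [Countable ι] (a : ι → ℝ≥0∞) {s : ℝ}
    (hs0 : 0 < s) (hs1 : s ≤ 1) :
    (∑' i, a i) ^ s ≤ ∑' i, (a i) ^ s := by
  rw [ENNReal.tsum_eq_iSup_sum]
  have hfin : ∀ F : Finset ι, (∑ i ∈ F, a i) ^ s ≤ ∑' i, (a i) ^ s := by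
    intro F
    have : (∑ i ∈ F, a i) ^ s ≤ ∑ i ∈ F, (a i) ^ s := by
      classical
      induction F using Finset.induction_on with
      | empty => simp [ENNReal.zero_rpow_of_pos hs0]
      | insert _ _ hx ih =>
          rw [Finset.sum_insert hx, Finset.sum_insert hx]
          exact le_trans (ENNReal.rpow_add_le_add_rpow _ _ hs0.le hs1)
            (add_le_add_right ih _)
    exact this.trans (ENNReal.sum_le_tsum F)
  have h1 : (⨆ F : Finset ι, ∑ i ∈ F, a i) ≤ (∑' i, (a i) ^ s) ^ s⁻¹ := by
    refine iSup_le fun F => ?_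
    have := ENNReal.rpow_le_rpow (hfin F) (inv_nonneg.mpr hs0.le)
    rwa [rpow_rpow_inv _ hs0.ne'] at this
  have := ENNReal.rpow_le_rpow h1 hs0.le
  rwa [rpow_inv_rpow _ hs0.ne'] at this

lemma iSup_min_nat_rpow (a : ℝ≥0∞) {c : ℝ} (hc : 0 ≤ c) :
    (⨆ n : ℕ, min a n ^ c) = a ^ c := by
  refine le_antisymm (iSup_le fun n => ENNReal.rpow_le_rpow (min_le_left _ _) hc) ?_
  rcases eq_or_ne a ⊤ with rfl | ha
  · rcases eq_or_lt_of_le hc with h0 | h0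
    · simp [← h0]
    · rw [ENNReal.top_rpow_of_pos h0, top_le_iff]
      have hcong : (⨆ n : ℕ, min (⊤:ℝ≥0∞) (n:ℝ≥0∞) ^ c) = ⨆ n : ℕ, (n:ℝ≥0∞) ^ c :=
        iSup_congr fun n => by rw [min_eq_right le_top]
      rw [hcong, iSup_eq_top]
      intro b hb
      obtain ⟨m, hm⟩ := ENNReal.exists_nat_gt
        (r := b ^ c⁻¹) (ENNReal.rpow_lt_top_of_nonneg (inv_nonneg.mpr hc) hb.ne).ne
      refine ⟨m, ?_⟩
      have := ENNReal.rpow_lt_rpow hm h0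
      rwa [rpow_inv_rpow _ h0.ne'] at this
  · obtain ⟨n, hn⟩ := ENNReal.exists_nat_gt ha
    refine le_trans (le_of_eq ?_) (le_iSup _ n)
    rw [min_eq_left hn.le]

/-- Minkowski-type self-absorption lemma for variable exponents, modular form. -/
lemma minkowski_modular (E : Set ℝ) (θ : ℝ → ℝ) (hθm : Measurable θ) (Θ : ℝ)
    (hθ : ∀ᵐ x ∂(volume.restrict E), 1 ≤ θ x ∧ θ x ≤ Θ) (hΘ : 1 ≤ Θ)
    (F : ℝ × ℝ → ℝ≥0∞) (hF : Measurable F)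
    (ν : Measure ℝ) [SigmaFinite ν]
    (lam : ℝ → ℝ≥0∞)
    (hlam0 : ∀ᵐ t ∂ν, 0 < lam t)
    (hlam : ∀ᵐ t ∂ν, ∫⁻ x in E, (F (x, t) / lam t) ^ θ x ≤ 1)
    (hsum : ∫⁻ t, lam t ∂ν ≤ 2⁻¹) :
    ∫⁻ x in E, (∫⁻ t, F (x, t) ∂ν) ^ θ x ≤ 1 := by
  set μ := volume.restrict E with hμdef
  set H : ℝ → ℝ≥0∞ := fun x => ∫⁻ t, F (x, t) ∂ν with hHdef
  have hHm : Measurable H := hF.lintegral_prod_right'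
  -- the degenerate set is product-null
  have hdeg : ∀ᵐ t ∂ν, ∀ᵐ x ∂μ, ¬(H x = 0 ∧ F (x, t) ≠ 0) := by
    set S : Set (ℝ × ℝ) := {z | H z.1 = 0 ∧ F z ≠ 0} with hSdef
    have hSm : MeasurableSet S :=
      ((hHm.comp measurable_fst) (measurableSet_singleton 0)).inter
        ((hF (measurableSet_singleton 0)).compl)
    have hprod : (μ.prod ν) S = 0 := by
      rw [Measure.prod_apply hSm]
      have : ∀ x : ℝ, ν (Prod.mk x ⁻¹' S) = 0 := by
        intro x
        rcases eq_or_ne (H x) 0 with hx | hx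
        · have hm : Measurable fun t => F (x, t) := hF.comp measurable_prodMk_left
          have hsec : ∀ᵐ t ∂ν, F (x, t) = 0 := (lintegral_eq_zero_iff hm).mp hx
          have h0 : ν {t | ¬ F (x, t) = 0} = 0 := ae_iff.mp hsec
          refine measure_mono_null (fun t ht => ht.2) h0
        · have : Prod.mk x ⁻¹' S = ∅ := by
            ext t; simp only [hSdef, mem_preimage, mem_setOf_eq, mem_empty_iff_false, iff_false]
            exact fun h => hx h.1
          simp [this]
      simp [this]
    have hswap : (ν.prod μ) (Prod.swap ⁻¹' S) = 0 := by
      rw [← Measure.prod_swap (μ := μ) (ν := ν),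
        Measure.map_apply measurable_swap (measurable_swap hSm)]
      have : Prod.swap ⁻¹' (Prod.swap ⁻¹' S) = S := by
        ext z; simp
      rw [this]; exact hprod
    have := (Measure.measure_prod_null (measurable_swap hSm)).mp hswap
    filter_upwards [this] with t ht
    have : μ (Prod.mk t ⁻¹' (Prod.swap ⁻¹' S)) = 0 := ht
    rw [ae_iff]
    convert this using 2
    ext x; simp [hSdef, Prod.swap]
  -- key: truncated modular bound
  have key : ∀ n : ℕ, ∫⁻ x in Icc (-(n:ℝ)-1) ((n:ℝ)+1),
      min (H x) ((n:ℝ≥0∞)+1) ^ θ x ∂μ ≤ 1 := by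
    intro n
    set I : Set ℝ := Icc (-(n:ℝ)-1) ((n:ℝ)+1) with hIdef
    set k : ℝ≥0∞ := (n:ℝ≥0∞) + 1 with hkdef
    have hk1 : 1 ≤ k := le_add_self
    have hkt : k ≠ ⊤ := by
      rw [hkdef]; exact ENNReal.add_ne_top.mpr ⟨ENNReal.natCast_ne_top n, ENNReal.one_ne_top⟩
    set μn := μ.restrict I with hμndef
    have hθn : ∀ᵐ x ∂μn, 1 ≤ θ x ∧ θ x ≤ Θ := ae_restrict_of_ae hθ
    set M := ∫⁻ x, min (H x) k ^ θ x ∂μn with hMdef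
    have hMfin : M ≠ ⊤ := by
      have hle : M ≤ k ^ Θ * μn univ := by
        rw [hMdef]
        calc ∫⁻ x, min (H x) k ^ θ x ∂μn ≤ ∫⁻ _x, k ^ Θ ∂μn := by
              refine lintegral_mono_ae ?_
              filter_upwards [hθn] with x hx
              exact le_trans (ENNReal.rpow_le_rpow (min_le_right _ _) (by linarith [hx.1]))
                (ENNReal.rpow_le_rpow_of_exponent_le hk1 hx.2)
          _ = k ^ Θ * μn univ := lintegral_const _
      refine ne_top_of_le_ne_top (ENNReal.mul_ne_top
        (ENNReal.rpow_lt_top_of_nonneg (by linarith) hkt).ne ?_) hle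
      rw [Measure.restrict_apply_univ]
      refine ne_top_of_le_ne_top ?_ (Measure.restrict_apply_le _ _)
      rw [Real.volume_Icc]; exact ofReal_ne_top
    have hmin_ne_top : ∀ x, min (H x) k ≠ ⊤ := fun x => ne_top_of_le_ne_top hkt (min_le_right _ _)
    -- step 1
    have step1 : M ≤ ∫⁻ x, min (H x) k ^ (θ x - 1) * H x ∂μn := by
      rw [hMdef]
      refine lintegral_mono_ae ?_
      filter_upwards [hθn] with x hx
      have heq : min (H x) k ^ θ x = min (H x) k ^ (θ x - 1) * min (H x) k := by
        rcases eq_or_ne (min (H x) k) 0 with h0 | h0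
        · rw [h0, ENNReal.zero_rpow_of_pos (by linarith [hx.1]), mul_zero]
        · have harith : θ x - 1 + 1 = θ x := by ring
          calc min (H x) k ^ θ x = min (H x) k ^ (θ x - 1 + 1) := by rw [harith]
            _ = min (H x) k ^ (θ x - 1) * min (H x) k ^ (1:ℝ) :=
                ENNReal.rpow_add _ _ h0 (hmin_ne_top x)
            _ = min (H x) k ^ (θ x - 1) * min (H x) k := by rw [ENNReal.rpow_one]
      rw [heq]
      exact mul_le_mul_right (min_le_left _ _) _
    -- step 2: push the constant inside the t-integral
    have step2 : ∫⁻ x, min (H x) k ^ (θ x - 1) * H x ∂μn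
        = ∫⁻ x, ∫⁻ t, min (H x) k ^ (θ x - 1) * F (x, t) ∂ν ∂μn := by
      refine lintegral_congr_ae ?_
      filter_upwards [hθn] with x hx
      exact (lintegral_const_mul' _ _
        (ENNReal.rpow_lt_top_of_nonneg (by linarith [hx.1]) (hmin_ne_top x)).ne).symm
    -- Fubini
    have hunc : Measurable (Function.uncurry fun x t => min (H x) k ^ (θ x - 1) * F (x, t)) := by
      apply Measurable.mul
      · exact (((hHm.comp measurable_fst).min measurable_const).pow
          ((hθm.comp measurable_fst).sub measurable_const))
      · exact hF.comp (measurable_fst.prodMk measurable_snd)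
    have step3 : ∫⁻ x, ∫⁻ t, min (H x) k ^ (θ x - 1) * F (x, t) ∂ν ∂μn
        = ∫⁻ t, ∫⁻ x, min (H x) k ^ (θ x - 1) * F (x, t) ∂μn ∂ν :=
      lintegral_lintegral_swap hunc.aemeasurable
    -- inner bound
    have inner : ∀ᵐ t ∂ν, ∫⁻ x, min (H x) k ^ (θ x - 1) * F (x, t) ∂μn ≤ lam t * (1 + M) := by
      filter_upwards [hlam0, hlam, hdeg] with t ht0 ht1 htd
      rcases eq_or_ne (lam t) ⊤ with hlt | hlt
      · rw [hlt, ENNReal.top_mul (by simp : (1:ℝ≥0∞) + M ≠ 0)]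
        exact le_top
      · have hstep : ∀ᵐ x ∂μn, min (H x) k ^ (θ x - 1) * F (x, t)
            ≤ lam t * ((F (x, t) / lam t) ^ θ x + min (H x) k ^ θ x) := by
          filter_upwards [hθn, ae_restrict_of_ae htd] with x hx hdx
          have hFx : F (x, t) = lam t * (F (x, t) / lam t) :=
            (ENNReal.mul_div_cancel ht0.ne' hlt).symm
          calc min (H x) k ^ (θ x - 1) * F (x, t)
              = lam t * ((F (x, t) / lam t) * min (H x) k ^ (θ x - 1)) := by
                conv_lhs => rw [hFx]
                ring
            _ ≤ lam t * ((F (x, t) / lam t) ^ θ x + min (H x) k ^ θ x) := by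
                refine mul_le_mul_right ?_ _
                refine mul_rpow_sub_one_le hx.1 (hmin_ne_top x) ?_
                intro hm0 _
                have hk0 : k ≠ 0 := by
                  intro h
                  rw [h] at hk1
                  simp at hk1
                have hH0 : H x = 0 := by
                  rcases le_total (H x) k with h | h
                  · rwa [min_eq_left h] at hm0
                  · rw [min_eq_right h] at hm0
                    exact absurd hm0 hk0
                have hF0 : F (x, t) = 0 := by
                  by_contra hne
                  exact hdx ⟨hH0, hne⟩
                rw [hF0, ENNReal.zero_div]
        calc ∫⁻ x, min (H x) k ^ (θ x - 1) * F (x, t) ∂μn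
            ≤ ∫⁻ x, lam t * ((F (x, t) / lam t) ^ θ x + min (H x) k ^ θ x) ∂μn :=
              lintegral_mono_ae hstep
          _ = lam t * ∫⁻ x, ((F (x, t) / lam t) ^ θ x + min (H x) k ^ θ x) ∂μn :=
              lintegral_const_mul' _ _ hlt
          _ = lam t * (∫⁻ x, (F (x, t) / lam t) ^ θ x ∂μn + M) := by
              rw [lintegral_add_left]
              exact ((hF.comp (measurable_prodMk_right)).div measurable_const).pow hθm
          _ ≤ lam t * (1 + M) := by
              refine mul_le_mul_right (add_le_add_left ?_ M) _
              exact le_trans (lintegral_mono' Measure.restrict_le_self le_rfl) ht1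
    -- put it together
    have hM1 : M ≤ 2⁻¹ * (1 + M) := by
      calc M ≤ ∫⁻ t, lam t * (1 + M) ∂ν := by
            have hstep : M ≤ ∫⁻ t, ∫⁻ x, min (H x) k ^ (θ x - 1) * F (x, t) ∂μn ∂ν := by
              rw [← step3, ← step2]; exact step1
            exact le_trans hstep (lintegral_mono_ae inner)
        _ = (∫⁻ t, lam t ∂ν) * (1 + M) :=
            lintegral_mul_const' _ _ (ENNReal.add_ne_top.mpr ⟨ENNReal.one_ne_top, hMfin⟩)
        _ ≤ 2⁻¹ * (1 + M) := mul_le_mul_left hsum _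
    have hself : 2⁻¹ * M + 2⁻¹ * M = M := by
      rw [← add_mul, ENNReal.inv_two_add_inv_two, one_mul]
    have hM2 : 2⁻¹ * M + 2⁻¹ * M ≤ 2⁻¹ + 2⁻¹ * M := by
      rw [hself]
      calc M ≤ 2⁻¹ * (1 + M) := hM1
        _ = 2⁻¹ + 2⁻¹ * M := by rw [mul_add, mul_one]
    have hM3 : 2⁻¹ * M ≤ 2⁻¹ :=
      (ENNReal.add_le_add_iff_right (ENNReal.mul_ne_top (by simp) hMfin)).mp hM2
    have hfin : M ≤ 1 := by
      have h2 := mul_le_mul_right hM3 (2:ℝ≥0∞)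
      rwa [← mul_assoc, ENNReal.mul_inv_cancel two_ne_zero ENNReal.ofNat_ne_top, one_mul] at h2
    exact hfin
  -- monotone limit
  set fn : ℕ → ℝ → ℝ≥0∞ := fun n x =>
    (Icc (-(n:ℝ)-1) ((n:ℝ)+1)).indicator (fun y => min (H y) ((n:ℝ≥0∞)+1) ^ θ y) x with hfndef
  have hfnm : ∀ n, AEMeasurable (fn n) μ := by
    intro n
    exact ((( hHm.min measurable_const).pow hθm).indicator measurableSet_Icc).aemeasurable
  have hmono : ∀ᵐ x ∂μ, Monotone fun n => fn n x := by
    filter_upwards [hθ] with x hx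
    intro n m hnm
    rw [hfndef]
    simp only
    by_cases hxin : x ∈ Icc (-(n:ℝ)-1) ((n:ℝ)+1)
    · have hxin' : x ∈ Icc (-(m:ℝ)-1) ((m:ℝ)+1) := by
        rcases hxin with ⟨h1, h2⟩
        constructor
        · refine le_trans ?_ h1
          have : (n:ℝ) ≤ m := Nat.cast_le.mpr hnm
          linarith
        · refine le_trans h2 ?_
          have : (n:ℝ) ≤ m := Nat.cast_le.mpr hnm
          linarith
      rw [indicator_of_mem hxin, indicator_of_mem hxin']
      refine ENNReal.rpow_le_rpow (min_le_min le_rfl ?_) (by linarith [hx.1])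
      exact add_le_add_left (Nat.cast_le.mpr hnm) 1
    · rw [indicator_of_notMem hxin]
      exact zero_le
  have hsup : ∀ᵐ x ∂μ, (⨆ n, fn n x) = H x ^ θ x := by
    filter_upwards [hθ] with x hx
    obtain ⟨N, hN⟩ := exists_nat_ge |x|
    have hmem : ∀ m : ℕ, N ≤ m → x ∈ Icc (-(m:ℝ)-1) ((m:ℝ)+1) := by
      intro m hm
      have h1 : |x| ≤ (m:ℝ) := le_trans hN (Nat.cast_le.mpr hm)
      constructor
      · linarith [neg_abs_le x]
      · linarith [le_abs_self x]
    refine le_antisymm (iSup_le fun n => ?_) ?_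
    · refine le_trans (Set.indicator_le_self _ _ x) ?_
      exact ENNReal.rpow_le_rpow (min_le_left _ _) (by linarith [hx.1])
    · rw [← iSup_min_nat_rpow (H x) (by linarith [hx.1] : (0:ℝ) ≤ θ x)]
      refine iSup_le fun n => ?_
      refine le_iSup_of_le (max n N) ?_
      rw [hfndef]
      simp only
      rw [indicator_of_mem (hmem _ (le_max_right n N))]
      refine ENNReal.rpow_le_rpow (min_le_min le_rfl ?_) (by linarith [hx.1])
      calc (n:ℝ≥0∞) ≤ (max n N : ℕ) := Nat.cast_le.mpr (le_max_left n N)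
        _ ≤ (max n N : ℕ) + 1 := le_self_add
  calc ∫⁻ x, H x ^ θ x ∂μ = ∫⁻ x, ⨆ n, fn n x ∂μ := (lintegral_congr_ae hsup).symm
    _ = ⨆ n, ∫⁻ x, fn n x ∂μ := lintegral_iSup' hfnm hmono
    _ ≤ 1 := by
        refine iSup_le fun n => ?_
        rw [hfndef]
        simp only
        rw [lintegral_indicator measurableSet_Icc]
        exact key n


/-- Dyadic decomposition of `Ioi x`. -/
lemma iUnion_dyadic (x : ℝ) : (⋃ k : ℤ, Ioc (x + 2 ^ k) (x + 2 ^ (k + 1))) = Ioi x := by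
  ext t
  simp only [mem_iUnion, mem_Ioc, mem_Ioi]
  constructor
  · rintro ⟨k, h1, _⟩
    have : (0:ℝ) < 2 ^ k := by positivity
    linarith
  · intro ht
    obtain ⟨k, hk1, hk2⟩ := exists_mem_Ioc_zpow (sub_pos.mpr ht) (one_lt_two (α := ℝ))
    exact ⟨k, by linarith, by linarith⟩

lemma pairwise_dyadic (x : ℝ) :
    Pairwise (Function.onFun Disjoint fun k : ℤ => Ioc (x + 2 ^ k) (x + 2 ^ (k + 1))) := by
  intro k l hkl
  rcases hkl.lt_or_gt with h | h
  · rw [Function.onFun, Set.Ioc_disjoint_Ioc]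
    refine le_trans (min_le_left _ _) (le_trans ?_ (le_max_right _ _))
    have : (2:ℝ) ^ (k+1) ≤ 2 ^ l := by
      apply zpow_le_zpow_right₀ one_le_two
      omega
    linarith
  · rw [Function.onFun, Set.Ioc_disjoint_Ioc]
    refine le_trans (min_le_right _ _) (le_trans ?_ (le_max_left _ _))
    have : (2:ℝ) ^ (l+1) ≤ 2 ^ k := by
      apply zpow_le_zpow_right₀ one_le_two
      omega
    linarith

lemma lintegral_Ioi_eq_tsum_dyadic (x : ℝ) (g : ℝ → ℝ≥0∞) :
    ∫⁻ t in Ioi x, g t = ∑' k : ℤ, ∫⁻ t in Ioc (x + 2 ^ k) (x + 2 ^ (k + 1)), g t := by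
  rw [← iUnion_dyadic x, Measure.restrict_iUnion (pairwise_dyadic x)
    (fun k => measurableSet_Ioc), lintegral_sum_measure]

/-- Step A: for a nonneg decreasing `f` on `(0,∞)` and `0 < c ≤ 1`, `x > 0`:
`(∫ₓ^∞ f)^c ≤ 2 ∫ₓ^∞ f(t)^c (t-x)^(c-1) dt`. -/
lemma stepA (f : ℝ → ℝ) (hf0 : ∀ x ∈ Ioi (0:ℝ), 0 ≤ f x)
    (hdec : ∀ x ∈ Ioi (0:ℝ), ∀ y ∈ Ioi (0:ℝ), x ≤ y → f y ≤ f x)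
    {c : ℝ} (hc0 : 0 < c) (hc1 : c ≤ 1) {x : ℝ} (hx : 0 < x) :
    (∫⁻ t in Ioi x, ENNReal.ofReal (f t)) ^ c
      ≤ 2 * ∫⁻ t in Ioi x, ENNReal.ofReal (f t) ^ c * ENNReal.ofReal (t - x) ^ (c - 1) := by
  have hxk : ∀ k : ℤ, 0 < x + 2 ^ k := fun k => by
    have : (0:ℝ) < 2 ^ k := by positivity
    linarith
  -- upper bound for each dyadic piece
  have bound1 : ∀ k : ℤ, ∫⁻ t in Ioc (x + 2 ^ k) (x + 2 ^ (k + 1)), ENNReal.ofReal (f t)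
      ≤ ENNReal.ofReal (2 ^ k) * ENNReal.ofReal (f (x + 2 ^ k)) := by
    intro k
    have hpt : ∫⁻ t in Ioc (x + 2 ^ k) (x + 2 ^ (k + 1)), ENNReal.ofReal (f t)
        ≤ ∫⁻ _t in Ioc (x + 2 ^ k) (x + 2 ^ (k + 1)), ENNReal.ofReal (f (x + 2 ^ k)) := by
      refine lintegral_mono_ae ((ae_restrict_iff' measurableSet_Ioc).mpr
        (Filter.Eventually.of_forall fun t ht => ?_))
      refine ENNReal.ofReal_le_ofReal ?_
      refine hdec _ (hxk k) t ?_ ht.1.le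
      exact lt_trans (hxk k) ht.1
    refine le_trans hpt ?_
    rw [setLIntegral_const, Real.volume_Ioc, mul_comm]
    have harith : x + 2 ^ (k + 1) - (x + 2 ^ k) = 2 ^ k := by
      rw [zpow_add_one₀ (two_ne_zero)]
      ring
    rw [harith]
  -- lower bound for each dyadic piece
  have bound2 : ∀ k : ℤ, ENNReal.ofReal (2 ^ k) ^ c * ENNReal.ofReal (f (x + 2 ^ k)) ^ c
      ≤ 2 * ∫⁻ t in Ioc (x + 2 ^ (k - 1)) (x + 2 ^ k),
          ENNReal.ofReal (f t) ^ c * ENNReal.ofReal (t - x) ^ (c - 1) := by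
    intro k
    have hpt : ∫⁻ t in Ioc (x + 2 ^ (k - 1)) (x + 2 ^ k),
        (ENNReal.ofReal (f (x + 2 ^ k)) ^ c * ENNReal.ofReal (2 ^ k) ^ (c - 1))
        ≤ ∫⁻ t in Ioc (x + 2 ^ (k - 1)) (x + 2 ^ k),
          ENNReal.ofReal (f t) ^ c * ENNReal.ofReal (t - x) ^ (c - 1) := by
      refine lintegral_mono_ae ((ae_restrict_iff' measurableSet_Ioc).mpr
        (Filter.Eventually.of_forall fun t ht => ?_))
      refine mul_le_mul' ?_ ?_
      · refine ENNReal.rpow_le_rpow (ENNReal.ofReal_le_ofReal ?_) hc0.le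
        refine hdec t (lt_trans (hxk (k-1)) ht.1) _ (hxk k) ht.2
      · refine rpow_le_rpow_of_nonpos (ENNReal.ofReal_le_ofReal ?_) (by linarith)
        linarith [ht.2]
    rw [setLIntegral_const, Real.volume_Ioc] at hpt
    refine le_trans (le_of_eq ?_) (mul_le_mul_right hpt 2)
    have harith : x + 2 ^ k - (x + 2 ^ (k - 1)) = 2 ^ (k - 1) := by
      have : (2:ℝ) ^ k = 2 ^ (k - 1) * 2 := by
        rw [← zpow_add_one₀ (two_ne_zero : (2:ℝ) ≠ 0) (k - 1)]
        norm_num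
      rw [this]; ring
    rw [harith]
    have h2k : (0:ℝ) < 2 ^ k := by positivity
    have h2k1 : (0:ℝ) < 2 ^ (k - 1) := by positivity
    rw [ENNReal.ofReal_rpow_of_pos h2k, ENNReal.ofReal_rpow_of_pos h2k]
    have hreal : ((2:ℝ)^k)^c = 2 * (((2:ℝ)^k)^(c-1) * 2^(k-1)) := by
      have h1 : ((2:ℝ)^k)^c = ((2:ℝ)^k)^(c-1) * ((2:ℝ)^k) := by
        have h := Real.rpow_add h2k (c-1) 1
        rw [Real.rpow_one] at h
        rw [← h]
        norm_num
      have h2 : (2:ℝ)^k = 2^(k-1) * 2 := by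
        rw [← zpow_add_one₀ (two_ne_zero : (2:ℝ) ≠ 0) (k - 1)]
        norm_num
      rw [h1]
      nth_rewrite 2 [h2]
      ring
    rw [hreal, ENNReal.ofReal_mul (by norm_num : (0:ℝ) ≤ 2),
      ENNReal.ofReal_mul (by positivity), ENNReal.ofReal_ofNat]
    ring
  -- assemble
  calc (∫⁻ t in Ioi x, ENNReal.ofReal (f t)) ^ c
      ≤ (∑' k : ℤ, ENNReal.ofReal (2 ^ k) * ENNReal.ofReal (f (x + 2 ^ k))) ^ c := by
        refine ENNReal.rpow_le_rpow ?_ hc0.le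
        rw [lintegral_Ioi_eq_tsum_dyadic]
        exact ENNReal.tsum_le_tsum bound1
    _ ≤ ∑' k : ℤ, (ENNReal.ofReal (2 ^ k) * ENNReal.ofReal (f (x + 2 ^ k))) ^ c :=
        tsum_rpow_le _ hc0 hc1
    _ = ∑' k : ℤ, ENNReal.ofReal (2 ^ k) ^ c * ENNReal.ofReal (f (x + 2 ^ k)) ^ c := by
        refine tsum_congr fun k => ENNReal.mul_rpow_of_nonneg _ _ hc0.le
    _ ≤ ∑' k : ℤ, 2 * ∫⁻ t in Ioc (x + 2 ^ (k - 1)) (x + 2 ^ k),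
          ENNReal.ofReal (f t) ^ c * ENNReal.ofReal (t - x) ^ (c - 1) :=
        ENNReal.tsum_le_tsum bound2
    _ = 2 * ∑' k : ℤ, ∫⁻ t in Ioc (x + 2 ^ (k - 1)) (x + 2 ^ k),
          ENNReal.ofReal (f t) ^ c * ENNReal.ofReal (t - x) ^ (c - 1) :=
        ENNReal.tsum_mul_left
    _ = 2 * ∫⁻ t in Ioi x, ENNReal.ofReal (f t) ^ c * ENNReal.ofReal (t - x) ^ (c - 1) := by
        congr 1
        rw [lintegral_Ioi_eq_tsum_dyadic]
        refine ((Equiv.subRight (1:ℤ)).tsum_eq fun k =>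
          ∫⁻ t in Ioc (x + 2 ^ k) (x + 2 ^ (k + 1)),
            ENNReal.ofReal (f t) ^ c * ENNReal.ofReal (t - x) ^ (c - 1)).symm ▸ ?_
        refine tsum_congr fun k => ?_
        have : k - 1 + 1 = k := by ring
        simp only [Equiv.subRight_apply]
        rw [this]

/-- If the modular is finite and the exponent is bounded below, the norm is finite. -/
lemma NE_lt_top {E : Set ℝ} {s : ℝ → ℝ} {g : ℝ → ℝ≥0∞}
    (hm : ∫⁻ x in E, g x ^ s x < ⊤) {s0 : ℝ} (hs0 : 0 < s0)
    (hs : ∀ᵐ x ∂(volume.restrict E), s0 ≤ s x) : NE E s g < ⊤ := by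
  set M := ∫⁻ x in E, g x ^ s x with hMdef
  set lam : ℝ≥0∞ := (M + 1) ^ s0⁻¹ with hlamdef
  have hlam1 : 1 ≤ lam := by
    rw [hlamdef]
    calc (1:ℝ≥0∞) = 1 ^ s0⁻¹ := (ENNReal.one_rpow _).symm
      _ ≤ (M + 1) ^ s0⁻¹ := ENNReal.rpow_le_rpow (by simp) (by positivity)
  have hlamt : lam ≠ ⊤ :=
    (ENNReal.rpow_lt_top_of_nonneg (by positivity) (ENNReal.add_ne_top.mpr ⟨hm.ne, one_ne_top⟩)).ne
  have hmod : ∫⁻ x in E, (g x / lam) ^ s x ≤ 1 := by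
    have hpt : ∀ᵐ x ∂(volume.restrict E), (g x / lam) ^ s x ≤ g x ^ s x * (lam ^ s0)⁻¹ := by
      filter_upwards [hs] with x hx
      rw [ENNReal.div_rpow_of_nonneg _ _ (by linarith), div_eq_mul_inv]
      refine mul_le_mul_right (ENNReal.inv_le_inv.mpr ?_) _
      exact ENNReal.rpow_le_rpow_of_exponent_le hlam1 hx
    calc ∫⁻ x in E, (g x / lam) ^ s x ≤ ∫⁻ x in E, g x ^ s x * (lam ^ s0)⁻¹ :=
          lintegral_mono_ae hpt
      _ = M * (lam ^ s0)⁻¹ := lintegral_mul_const' _ _ (by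
          simp only [ne_eq, ENNReal.inv_eq_top]
          intro h
          rw [ENNReal.rpow_eq_zero_iff] at h
          rcases h with ⟨h1, _⟩ | ⟨_, h2⟩
          · rw [h1] at hlam1; simp at hlam1
          · linarith)
      _ ≤ 1 := by
          rw [hlamdef, rpow_inv_rpow _ hs0.ne']
          rw [ENNReal.mul_inv_le_iff (by simp) (by simp [ENNReal.add_ne_top, hm.ne]), one_mul]
          exact le_self_add
  exact lt_of_le_of_lt (NE_le_of_mem (lt_of_lt_of_le zero_lt_one hlam1) hmod)
    (lt_top_iff_ne_top.mpr hlamt)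

/-- If the norm is zero then the function vanishes a.e. -/
lemma ae_zero_of_NE_eq_zero {E : Set ℝ} {s : ℝ → ℝ} {g : ℝ → ℝ≥0∞}
    (hg : Measurable g) (hE : MeasurableSet E)
    {s0 : ℝ} (hs0 : 0 < s0) (hs : ∀ᵐ x ∂(volume.restrict E), s0 ≤ s x)
    (h : NE E s g = 0) : ∀ᵐ x ∂(volume.restrict E), g x = 0 := by
  by_contra hcon
  rw [Filter.eventually_iff, ← Filter.eventually_iff] at hcon
  have hpos : volume.restrict E {x | g x ≠ 0} ≠ 0 := fun h0 => hcon (ae_iff.mpr h0)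
  -- find a measurable set with g ≥ c of positive measure
  have hU : {x | g x ≠ 0} = ⋃ n : ℕ, {x | ((n:ℝ≥0∞)+1)⁻¹ ≤ g x} := by
    ext y
    simp only [mem_setOf_eq, mem_iUnion]
    constructor
    · intro hy
      obtain ⟨n, hn⟩ := ENNReal.exists_inv_nat_lt hy
      exact ⟨n, le_trans (by
        refine ENNReal.inv_le_inv.mpr ?_
        exact le_self_add) hn.le⟩
    · rintro ⟨n, hn⟩ h0
      rw [h0] at hn
      simp at hn
  obtain ⟨n, hn⟩ : ∃ n : ℕ, volume.restrict E {x | ((n:ℝ≥0∞)+1)⁻¹ ≤ g x} ≠ 0 := by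
    by_contra hall
    push_neg at hall
    exact hpos (by rw [hU]; exact measure_iUnion_null hall)
  set c : ℝ≥0∞ := ((n:ℝ≥0∞)+1)⁻¹ with hcdef
  have hc0 : 0 < c := ENNReal.inv_pos.mpr (by simp)
  have hct : c ≠ ⊤ := by
    simp only [hcdef, ne_eq, ENNReal.inv_eq_top]
    simp
  set A : Set ℝ := {x | c ≤ g x} with hAdef
  have hAm : MeasurableSet A := hg measurableSet_Ici
  set m : ℝ≥0∞ := volume.restrict E A with hmdef
  have hm0 : 0 < m := pos_iff_ne_zero.mpr hn
  have hminv : m⁻¹ ≠ ⊤ := by simpa using hm0.ne'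
  set X : ℝ≥0∞ := (m⁻¹ + 1) ^ s0⁻¹ with hXdef
  have hX1 : 1 ≤ X := by
    calc (1:ℝ≥0∞) = 1 ^ s0⁻¹ := (ENNReal.one_rpow _).symm
      _ ≤ X := ENNReal.rpow_le_rpow (by simp) (by positivity)
  have hXt : X ≠ ⊤ :=
    (ENNReal.rpow_lt_top_of_nonneg (by positivity) (by simp [hminv])).ne
  have hX0 : X ≠ 0 := by positivity
  set lam : ℝ≥0∞ := c * X⁻¹ with hlamdef
  have hlam0 : 0 < lam := ENNReal.mul_pos hc0.ne' (ENNReal.inv_ne_zero.mpr hXt)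
  have hclam : X ≤ c / lam := by
    rw [ENNReal.le_div_iff_mul_le (Or.inl hlam0.ne') (Or.inr hct)]
    rw [hlamdef, ← mul_assoc, mul_comm X c, mul_assoc, ENNReal.mul_inv_cancel hX0 hXt, mul_one]
  have hmod : ∫⁻ x in E, (g x / lam) ^ s x ≤ 1 :=
    modular_le_one_of_NE_lt (by filter_upwards [hs] with x hx; linarith) (h ▸ hlam0)
  have hlow : X ^ s0 * ((volume.restrict E).restrict A) univ
      ≤ ∫⁻ x in E, (g x / lam) ^ s x := by
    rw [← lintegral_const]
    calc ∫⁻ _x, X ^ s0 ∂((volume.restrict E).restrict A)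
        ≤ ∫⁻ x, (g x / lam) ^ s x ∂((volume.restrict E).restrict A) := by
          refine lintegral_mono_ae ?_
          filter_upwards [ae_restrict_mem hAm, ae_restrict_of_ae hs] with x hxA hxs
          have h1 : X ≤ g x / lam :=
            le_trans hclam (ENNReal.div_le_div_right hxA _)
          calc X ^ s0 ≤ X ^ s x := ENNReal.rpow_le_rpow_of_exponent_le hX1 hxs
            _ ≤ (g x / lam) ^ s x := ENNReal.rpow_le_rpow h1 (by linarith)
      _ ≤ ∫⁻ x in E, (g x / lam) ^ s x :=
          lintegral_mono' Measure.restrict_le_self le_rfl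
  rw [Measure.restrict_apply_univ, ← hmdef, hXdef, rpow_inv_rpow _ hs0.ne'] at hlow
  have hgt : (1:ℝ≥0∞) < (m⁻¹ + 1) * m := by
    rcases eq_or_ne m ⊤ with hmt | hmt
    · rw [hmt]
      simp
    · rw [add_mul, ENNReal.inv_mul_cancel hm0.ne' hmt, one_mul]
      exact ENNReal.lt_add_right one_ne_top hm0.ne'
  exact absurd (le_trans hlow hmod) (not_le.mpr hgt)

/-- `∫_0^∞ e^{-t} dt ≤ 1`. -/
lemma lintegral_exp_neg_le_one : ∫⁻ t in Ioi (0:ℝ), ENNReal.ofReal (Real.exp (-t)) ≤ 1 := by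
  have hInt : IntegrableOn (fun t : ℝ => Real.exp (-t)) (Ioi 0) := by
    have := exp_neg_integrableOn_Ioi 0 one_pos
    simpa using this
  rw [← ofReal_integral_eq_lintegral_ofReal hInt
    (Filter.Eventually.of_forall fun t => (Real.exp_pos _).le)]
  rw [integral_exp_neg_Ioi]
  simp


lemma ENNRpow_add_le_add_rpow' {p : ℝ} (a b : ℝ≥0∞) (h0 : 0 ≤ p) (h1 : p ≤ 1) :
    (a + b) ^ p ≤ a ^ p + b ^ p := ENNReal.rpow_add_le_add_rpow a b h0 h1

set_option maxHeartbeats 1000000 in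
lemma main_estimate (p q ω₁ ω₂ f : ℝ → ℝ) (hp : Measurable p) (hq : Measurable q)
    (hω₁m : Measurable ω₁) (hω₂m : Measurable ω₂) (hfm : Measurable f)
    (hpl : 0 < plow p) (hpl1 : plow p ≤ 1)
    (hb : ∀ᵐ x ∂(volume.restrict (Set.Ioi (0:ℝ))),
      plow p ≤ p x ∧ p x ≤ q x ∧ q x ≤ 1)
    (hω₁ : ∀ᵐ x ∂(volume.restrict (Set.Ioi (0:ℝ))), 0 < ω₁ x)
    (hω₂ : ∀ᵐ x ∂(volume.restrict (Set.Ioi (0:ℝ))), 0 < ω₂ x)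
    (hf0 : ∀ x ∈ Set.Ioi (0:ℝ), 0 ≤ f x)
    (hfdec : ∀ x ∈ Set.Ioi (0:ℝ), ∀ y ∈ Set.Ioi (0:ℝ), x ≤ y → f y ≤ f x)
    (B : ℝ≥0∞) (hB0 : 0 < B) (hBt : B ≠ ⊤)
    (hWB : dualHardyWeightNorm p q ω₁ ω₂ < B)
    (hN0 : 0 < NE (Set.Ioi 0) p (fun x => ENNReal.ofReal (|f x| * ω₁ x)))
    (hNt : NE (Set.Ioi 0) p (fun x => ENNReal.ofReal (|f x| * ω₁ x)) ≠ ⊤) :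
    NE (Set.Ioi 0) q (fun x => ENNReal.ofReal (ω₂ x) * HopDual f x) ≤
      ENNReal.ofReal (2 ^ ((12:ℝ) / plow p)) * B *
        NE (Set.Ioi 0) p (fun x => ENNReal.ofReal (|f x| * ω₁ x)) := by
  have hplne : plow p ≠ 0 := hpl.ne'
  set pl : ℝ := plow p with hpldef
  set ν : Measure ℝ := volume.restrict (Set.Ioi 0) with hνdef
  set g : ℝ → ℝ≥0∞ := fun x => ENNReal.ofReal (|f x| * ω₁ x) with hgdef
  set N : ℝ≥0∞ := NE (Set.Ioi 0) p g with hNdef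
  set F0 : ℝ → ℝ≥0∞ := fun t => ENNReal.ofReal (f t) with hF0def
  set W₁ : ℝ → ℝ≥0∞ := fun t => ENNReal.ofReal (ω₁ t) with hW₁def
  set W₂ : ℝ → ℝ≥0∞ := fun t => ENNReal.ofReal (ω₂ t) with hW₂def
  set V : ℝ → ℝ≥0∞ := fun t => NE (Set.Ioo 0 t) q
      (fun x => ENNReal.ofReal ((t - x) ^ ((pl - 1) / pl) * ω₂ x / x)) with hVdef
  set D : ℝ → ℝ≥0∞ := dualHardyWeight p q ω₁ ω₂ with hDdef
  have hDV : ∀ t, D t = V t / W₁ t := fun t => rfl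
  set Λ : ℝ≥0∞ := ENNReal.ofReal (2 ^ ((12:ℝ) / pl)) * B * N with hΛdef
  have hΛ0 : Λ ≠ 0 := by
    refine mul_ne_zero (mul_ne_zero ?_ hB0.ne') hN0.ne'
    rw [ne_eq, ENNReal.ofReal_eq_zero, not_le]
    positivity
  have hΛt : Λ ≠ ⊤ :=
    ENNReal.mul_ne_top (ENNReal.mul_ne_top ENNReal.ofReal_ne_top hBt) hNt
  have hΛplt : Λ ^ pl ≠ ⊤ := (ENNReal.rpow_lt_top_of_nonneg hpl.le hΛt).ne
  have hΛpl0 : Λ ^ pl ≠ 0 := by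
    simp only [ne_eq, ENNReal.rpow_eq_zero_iff, not_or]
    exact ⟨fun h => hΛ0 h.1, fun h => hΛt h.1⟩
  set θ : ℝ → ℝ := fun x => q x / pl with hθdef
  set F : ℝ × ℝ → ℝ≥0∞ := fun z =>
    ({z' : ℝ × ℝ | 0 < z'.1 ∧ z'.1 < z'.2}).indicator
      (fun z' => 2 * F0 z'.2 ^ pl * (ENNReal.ofReal (z'.2 - z'.1)) ^ (pl - 1) *
        (W₂ z'.1 / (ENNReal.ofReal z'.1 * Λ)) ^ pl) z with hFdef
  have hSm : MeasurableSet {z' : ℝ × ℝ | 0 < z'.1 ∧ z'.1 < z'.2} :=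
    ((measurableSet_lt measurable_const measurable_fst).inter
      (measurableSet_lt measurable_fst measurable_snd))
  have hFm : Measurable F := by
    refine Measurable.indicator ?_ hSm
    refine Measurable.mul ?_ ?_
    · refine Measurable.mul ?_ ?_
      · exact measurable_const.mul
          (((measurable_ofReal.comp (hfm.comp measurable_snd))).pow measurable_const)
      · exact (measurable_ofReal.comp (measurable_snd.sub measurable_fst)).pow
          measurable_const
    · exact ((measurable_ofReal.comp (hω₂m.comp measurable_fst)).div
        ((measurable_ofReal.comp measurable_fst).mul measurable_const)).pow measurable_const
  set lamf : ℝ → ℝ≥0∞ := fun t =>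
    (2:ℝ≥0∞) ^ ((1:ℝ) + pl) * (Λ ^ pl)⁻¹ * (F0 t ^ pl * V t ^ pl) +
      4⁻¹ * ENNReal.ofReal (Real.exp (-t)) with hlamfdef
  have hlamf0 : ∀ t, 0 < lamf t := by
    intro t
    have h2 : (0:ℝ≥0∞) < 4⁻¹ * ENNReal.ofReal (Real.exp (-t)) :=
      ENNReal.mul_pos (by norm_num) (ENNReal.ofReal_pos.mpr (Real.exp_pos _)).ne'
    exact lt_of_lt_of_le h2 (self_le_add_left _ _)
  -- the inner-integral identity
  have hH : ∀ x : ℝ, 0 < x → (∫⁻ t, F (x, t) ∂ν) =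
      (W₂ x / (ENNReal.ofReal x * Λ)) ^ pl *
        (2 * ∫⁻ t in Ioi x, F0 t ^ pl * (ENNReal.ofReal (t - x)) ^ (pl - 1)) := by
    intro x hx
    have hcne : (W₂ x / (ENNReal.ofReal x * Λ)) ^ pl ≠ ⊤ := by
      refine (ENNReal.rpow_lt_top_of_nonneg hpl.le ?_).ne
      exact (ENNReal.div_lt_top ENNReal.ofReal_ne_top
        (mul_ne_zero (ENNReal.ofReal_pos.mpr hx).ne' hΛ0)).ne
    have h1 : ∀ t : ℝ, F (x, t) = (Ioi x).indicator
        (fun t => (2 * F0 t ^ pl * (ENNReal.ofReal (t - x)) ^ (pl - 1)) *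
          (W₂ x / (ENNReal.ofReal x * Λ)) ^ pl) t := by
      intro t
      by_cases ht : x < t
      · simp only [hFdef]
        rw [Set.indicator_of_mem
            (show ((x,t) : ℝ × ℝ) ∈ {z' : ℝ × ℝ | 0 < z'.1 ∧ z'.1 < z'.2} from ⟨hx, ht⟩),
          Set.indicator_of_mem (show t ∈ Ioi x from ht)]
      · have hnm : ((x,t) : ℝ × ℝ) ∉ {z' : ℝ × ℝ | 0 < z'.1 ∧ z'.1 < z'.2} :=
          fun hc => ht hc.2
        have hnm2 : t ∉ Ioi x := ht
        simp only [hFdef]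
        rw [Set.indicator_of_notMem hnm, Set.indicator_of_notMem hnm2]
    calc (∫⁻ t, F (x, t) ∂ν)
        = ∫⁻ t, (Ioi x).indicator
            (fun t => (2 * F0 t ^ pl * (ENNReal.ofReal (t - x)) ^ (pl - 1)) *
              (W₂ x / (ENNReal.ofReal x * Λ)) ^ pl) t ∂ν := lintegral_congr h1
      _ = ∫⁻ t in Ioi x, (2 * F0 t ^ pl * (ENNReal.ofReal (t - x)) ^ (pl - 1)) *
              (W₂ x / (ENNReal.ofReal x * Λ)) ^ pl ∂ν := lintegral_indicator measurableSet_Ioi _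
      _ = ∫⁻ t in Ioi x, (2 * F0 t ^ pl * (ENNReal.ofReal (t - x)) ^ (pl - 1)) *
              (W₂ x / (ENNReal.ofReal x * Λ)) ^ pl := by
            rw [hνdef, Measure.restrict_restrict measurableSet_Ioi,
              (show Ioi x ∩ Ioi (0:ℝ) = Ioi x from
                Set.inter_eq_left.mpr (fun t ht => lt_trans hx ht))]
      _ = (∫⁻ t in Ioi x, 2 * F0 t ^ pl * (ENNReal.ofReal (t - x)) ^ (pl - 1)) *
              (W₂ x / (ENNReal.ofReal x * Λ)) ^ pl := lintegral_mul_const' _ _ hcne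
      _ = (W₂ x / (ENNReal.ofReal x * Λ)) ^ pl *
            (2 * ∫⁻ t in Ioi x, F0 t ^ pl * (ENNReal.ofReal (t - x)) ^ (pl - 1)) := by
            rw [mul_comm]
            congr 1
            rw [← lintegral_const_mul' _ _ (by norm_num : (2:ℝ≥0∞) ≠ ⊤)]
            refine lintegral_congr fun t => by ring
  -- KEY1 : pointwise domination of the target integrand
  have key1 : ∀ᵐ x ∂ν, (ENNReal.ofReal (ω₂ x) * HopDual f x / Λ) ^ q x ≤
      (∫⁻ t, F (x, t) ∂ν) ^ θ x := by
    filter_upwards [hb, ae_restrict_mem measurableSet_Ioi] with x hbx hx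
    have hx0 : (0:ℝ) < x := hx
    have hofx0 : ENNReal.ofReal x ≠ 0 := (ENNReal.ofReal_pos.mpr hx0).ne'
    have halg : ENNReal.ofReal (ω₂ x) * HopDual f x / Λ =
        (W₂ x / (ENNReal.ofReal x * Λ)) * (∫⁻ t in Ioi x, F0 t) := by
      show W₂ x * ((∫⁻ t in Ioi x, F0 t) / ENNReal.ofReal x) / Λ = _
      rw [div_eq_mul_inv, div_eq_mul_inv, div_eq_mul_inv,
        ENNReal.mul_inv (Or.inl hofx0) (Or.inl ENNReal.ofReal_ne_top)]
      ring
    have hqpl : pl * θ x = q x := by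
      rw [hθdef]
      field_simp
    have hθx0 : 0 ≤ θ x := by
      rw [hθdef]
      have : 0 ≤ q x := le_trans hpl.le (le_trans hbx.1 hbx.2.1)
      positivity
    calc (ENNReal.ofReal (ω₂ x) * HopDual f x / Λ) ^ q x
        = (((W₂ x / (ENNReal.ofReal x * Λ)) * (∫⁻ t in Ioi x, F0 t)) ^ pl) ^ θ x := by
          rw [halg, ← ENNReal.rpow_mul, hqpl]
      _ = ((W₂ x / (ENNReal.ofReal x * Λ)) ^ pl * (∫⁻ t in Ioi x, F0 t) ^ pl) ^ θ x := by
          rw [ENNReal.mul_rpow_of_nonneg _ _ hpl.le]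
      _ ≤ ((W₂ x / (ENNReal.ofReal x * Λ)) ^ pl *
            (2 * ∫⁻ t in Ioi x, F0 t ^ pl * (ENNReal.ofReal (t - x)) ^ (pl - 1))) ^ θ x := by
          refine ENNReal.rpow_le_rpow (mul_le_mul_right ?_ _) hθx0
          exact stepA f hf0 hfdec hpl hpl1 hx0
      _ = (∫⁻ t, F (x, t) ∂ν) ^ θ x := by rw [hH x hx0]
  -- the budget bound
  have hsum : ∫⁻ t, lamf t ∂ν ≤ 2⁻¹ := by
    have hS₂m : MeasurableSet {x ∈ Set.Ioi (0:ℝ) | pl < p x} :=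
      measurableSet_Ioi.inter (hp measurableSet_Ioi)
    have hS₁m : MeasurableSet {x ∈ Set.Ioi (0:ℝ) | p x = pl} :=
      measurableSet_Ioi.inter (hp (measurableSet_singleton pl))
    have hWB2 : NE {x ∈ Set.Ioi (0:ℝ) | pl < p x} (fun x => pl * p x / (p x - pl)) D +
        essSup D (volume.restrict {x ∈ Set.Ioi (0:ℝ) | p x = pl}) < B := by
      have hrw : dualHardyWeightNorm p q ω₁ ω₂ =
          NE {x ∈ Set.Ioi (0:ℝ) | pl < p x} (fun x => pl * p x / (p x - pl)) D +
            essSup D (volume.restrict {x ∈ Set.Ioi (0:ℝ) | p x = pl}) := by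
        rw [dualHardyWeightNorm, ← hpldef, ← hDdef]
      rw [← hrw]
      exact hWB
    have hWB' : NE {x ∈ Set.Ioi (0:ℝ) | pl < p x} (fun x => pl * p x / (p x - pl)) D < B ∧
        essSup D (volume.restrict {x ∈ Set.Ioi (0:ℝ) | p x = pl}) < B :=
      ⟨lt_of_le_of_lt le_self_add hWB2, lt_of_le_of_lt (self_le_add_left _ _) hWB2⟩
    have hDS₁ : ∀ᵐ t ∂ν, t ∈ {x ∈ Set.Ioi (0:ℝ) | p x = pl} → D t ≤ B := by
      have h1 : ∀ᵐ t ∂(volume.restrict {x ∈ Set.Ioi (0:ℝ) | p x = pl}), D t ≤ B :=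
        (ENNReal.ae_le_essSup D).mono (fun t ht => le_trans ht hWB'.2.le)
      exact ae_restrict_of_ae ((ae_restrict_iff' hS₁m).mp h1)
    have h2N0 : (2 * N : ℝ≥0∞) ≠ 0 := mul_ne_zero two_ne_zero hN0.ne'
    have h2Nt : (2 * N : ℝ≥0∞) ≠ ⊤ := ENNReal.mul_ne_top ENNReal.ofNat_ne_top hNt
    have h2B0 : (2 * B : ℝ≥0∞) ≠ 0 := mul_ne_zero two_ne_zero hB0.ne'
    have h2Bt : (2 * B : ℝ≥0∞) ≠ ⊤ := ENNReal.mul_ne_top ENNReal.ofNat_ne_top hBt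
    have modular_g : ∫⁻ x in Set.Ioi (0:ℝ), (g x / (2 * N)) ^ p x ≤ 1 := by
      refine modular_le_one_of_NE_lt ?_ ?_
      · filter_upwards [hb] with x hx; linarith [hx.1]
      · rw [← hNdef]
        nth_rewrite 1 [← one_mul N]
        exact ENNReal.mul_lt_mul_left hN0.ne' hNt one_lt_two
    have modular_D : ∫⁻ x in {x ∈ Set.Ioi (0:ℝ) | pl < p x},
        (D x / (2 * B)) ^ (pl * p x / (p x - pl)) ≤ 1 := by
      refine modular_le_one_of_NE_lt ?_ (lt_of_lt_of_le hWB'.1 ?_)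
      · refine (ae_restrict_iff' hS₂m).mpr (Filter.Eventually.of_forall fun x hx => ?_)
        have h1 : (0:ℝ) < p x := lt_trans hpl hx.2
        have h2 : (0:ℝ) < p x - pl := by linarith [hx.2]
        positivity
      · nth_rewrite 1 [← one_mul B]
        exact mul_le_mul_left one_le_two B
    -- pointwise Young-type bound
    have hTpt : ∀ᵐ t ∂ν, F0 t ^ pl * V t ^ pl ≤
        ((2*N) * (2*B)) ^ pl * ((g t / (2*N)) ^ p t +
          ({x ∈ Set.Ioi (0:ℝ) | pl < p x}).indicator
            (fun x => (D x / (2*B)) ^ (pl * p x / (p x - pl))) t) := by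
      filter_upwards [hb, hω₁, hDS₁, ae_restrict_mem measurableSet_Ioi] with t hbt hω₁t hDS₁t ht0
      have hW₁0 : W₁ t ≠ 0 := (ENNReal.ofReal_pos.mpr hω₁t).ne'
      have hW₁t : W₁ t ≠ ⊤ := ENNReal.ofReal_ne_top
      have hVD : V t = D t * W₁ t := by
        rw [hDV t]
        exact (ENNReal.div_mul_cancel hW₁0 hW₁t).symm
      have hgt : g t = F0 t * W₁ t := by
        rw [hgdef]
        simp only [hF0def, hW₁def]
        rw [abs_of_nonneg (hf0 t ht0), ENNReal.ofReal_mul (hf0 t ht0)]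
      have heq : F0 t ^ pl * V t ^ pl = g t ^ pl * D t ^ pl := by
        rw [hVD, ENNReal.mul_rpow_of_nonneg _ _ hpl.le, hgt,
          ENNReal.mul_rpow_of_nonneg _ _ hpl.le]
        ring
      have hgsplit : g t ^ pl = (2*N)^pl * (g t / (2*N))^pl := by
        rw [← ENNReal.mul_rpow_of_nonneg _ _ hpl.le, ENNReal.mul_div_cancel h2N0 h2Nt]
      have hDsplit : D t ^ pl = (2*B)^pl * (D t / (2*B))^pl := by
        rw [← ENNReal.mul_rpow_of_nonneg _ _ hpl.le, ENNReal.mul_div_cancel h2B0 h2Bt]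
      have hcore : (g t / (2*N))^pl * (D t/(2*B))^pl ≤ (g t/(2*N))^(p t) +
          ({x ∈ Set.Ioi (0:ℝ) | pl < p x}).indicator
            (fun x => (D x / (2*B)) ^ (pl * p x / (p x - pl))) t := by
        rcases eq_or_lt_of_le hbt.1 with hpe | hplt
        · have hDB : D t ≤ B := hDS₁t ⟨ht0, hpe.symm⟩
          have hv1 : (D t/(2*B))^pl ≤ 1 := by
            calc (D t/(2*B))^pl ≤ (B/(2*B))^pl :=
                  ENNReal.rpow_le_rpow (ENNReal.div_le_div_right hDB _) hpl.le
              _ ≤ 1^pl := by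
                  refine ENNReal.rpow_le_rpow ?_ hpl.le
                  refine div_le_of_le_mul ?_
                  rw [one_mul]
                  nth_rewrite 1 [← one_mul B]
                  exact mul_le_mul_left one_le_two B
              _ = 1 := ENNReal.one_rpow _
          calc (g t / (2*N))^pl * (D t/(2*B))^pl ≤ (g t / (2*N))^pl * 1 :=
                mul_le_mul_right hv1 _
            _ = (g t/(2*N))^(p t) := by rw [mul_one, ← hpe]
            _ ≤ _ := le_self_add
        · have hu : 1 < p t / pl := (one_lt_div hpl).mpr hplt
          have hyoung := young_conj ((g t/(2*N))^pl) ((D t/(2*B))^pl) hu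
          have he1 : ((g t/(2*N))^pl) ^ (p t / pl) = (g t/(2*N))^(p t) := by
            rw [← ENNReal.rpow_mul]
            congr 1
            rw [mul_comm, div_mul_cancel₀ _ hplne]
          have hptpl : p t / pl - 1 = (p t - pl)/pl := by field_simp
          have he2 : ((D t/(2*B))^pl) ^ ((p t / pl) / (p t / pl - 1)) =
              (D t/(2*B))^(pl * p t / (p t - pl)) := by
            rw [← ENNReal.rpow_mul]
            congr 1
            rw [hptpl]
            have hne : p t - pl ≠ 0 := by linarith [hplt]
            field_simp
          rw [he1, he2] at hyoung
          refine le_trans hyoung (add_le_add_right (le_of_eq ?_) _)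
          rw [Set.indicator_of_mem (show t ∈ {x ∈ Set.Ioi (0:ℝ) | pl < p x} from ⟨ht0, hplt⟩)]
      calc F0 t ^ pl * V t ^ pl
          = ((2*N)^pl * (2*B)^pl) * ((g t / (2*N))^pl * (D t/(2*B))^pl) := by
            rw [heq, hgsplit, hDsplit]; ring
        _ ≤ ((2*N)^pl * (2*B)^pl) * ((g t/(2*N))^(p t) + _) := mul_le_mul_right hcore _
        _ = ((2*N) * (2*B)) ^ pl * ((g t/(2*N))^(p t) +
              ({x ∈ Set.Ioi (0:ℝ) | pl < p x}).indicator
                (fun x => (D x / (2*B)) ^ (pl * p x / (p x - pl))) t) := by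
            rw [ENNReal.mul_rpow_of_nonneg (2*N) (2*B) hpl.le,
              ENNReal.mul_rpow_of_nonneg 2 N hpl.le]
    -- integrate the pointwise bound
    have hγt : (((2*N) * (2*B)) : ℝ≥0∞) ^ pl ≠ ⊤ :=
      (ENNReal.rpow_lt_top_of_nonneg hpl.le (ENNReal.mul_ne_top h2Nt h2Bt)).ne
    have hT : ∫⁻ t, F0 t ^ pl * V t ^ pl ∂ν ≤ ((2*N) * (2*B)) ^ pl * 2 := by
      calc ∫⁻ t, F0 t ^ pl * V t ^ pl ∂ν
          ≤ ∫⁻ t, ((2*N) * (2*B)) ^ pl * ((g t / (2*N)) ^ p t +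
              ({x ∈ Set.Ioi (0:ℝ) | pl < p x}).indicator
                (fun x => (D x / (2*B)) ^ (pl * p x / (p x - pl))) t) ∂ν :=
            lintegral_mono_ae hTpt
        _ = ((2*N) * (2*B)) ^ pl * ∫⁻ t, ((g t / (2*N)) ^ p t +
              ({x ∈ Set.Ioi (0:ℝ) | pl < p x}).indicator
                (fun x => (D x / (2*B)) ^ (pl * p x / (p x - pl))) t) ∂ν :=
            lintegral_const_mul' _ _ hγt
        _ ≤ ((2*N) * (2*B)) ^ pl * 2 := by
            refine mul_le_mul_right ?_ _
            have hgm : Measurable fun t => (g t / (2*N)) ^ p t := by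
              refine Measurable.pow ?_ hp
              exact (measurable_ofReal.comp (hfm.abs.mul hω₁m)).div measurable_const
            rw [lintegral_add_left hgm]
            have hi1 : ∫⁻ t, (g t / (2*N)) ^ p t ∂ν ≤ 1 := modular_g
            have hi2 : ∫⁻ t, ({x ∈ Set.Ioi (0:ℝ) | pl < p x}).indicator
                (fun x => (D x / (2*B)) ^ (pl * p x / (p x - pl))) t ∂ν ≤ 1 := by
              rw [lintegral_indicator hS₂m]
              rw [hνdef, Measure.restrict_restrict hS₂m,
                Set.inter_eq_left.mpr (fun x hx => hx.1)]
              exact modular_D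
            calc _ ≤ (1 + 1 : ℝ≥0∞) := add_le_add hi1 hi2
              _ = 2 := one_add_one_eq_two
    -- arithmetic of the constants
    have harith : (2:ℝ≥0∞) ^ ((1:ℝ) + pl) * (Λ ^ pl)⁻¹ * (((2*N) * (2*B)) ^ pl * 2) ≤ 4⁻¹ := by
      have h4 : ((2*N)*(2*B) : ℝ≥0∞) = 4 * (N*B) := by ring
      have hΛ' : Λ = ENNReal.ofReal (2^((12:ℝ)/pl)) * (N*B) := by rw [hΛdef]; ring
      have hNB0 : (N*B) ≠ 0 := mul_ne_zero hN0.ne' hB0.ne'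
      have hNBt : (N*B) ≠ ⊤ := ENNReal.mul_ne_top hNt hBt
      have hc₀pl : (ENNReal.ofReal ((2:ℝ)^((12:ℝ)/pl)))^pl = (2:ℝ≥0∞)^(12:ℝ) := by
        rw [ENNReal.ofReal_rpow_of_pos (by positivity),
          ← Real.rpow_mul (by norm_num : (0:ℝ) ≤ 2), div_mul_cancel₀ _ hplne,
          ← ENNReal.ofReal_rpow_of_pos (by norm_num : (0:ℝ) < 2), ENNReal.ofReal_ofNat]
      calc (2:ℝ≥0∞) ^ ((1:ℝ) + pl) * (Λ ^ pl)⁻¹ * (((2*N) * (2*B)) ^ pl * 2)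
          = (2:ℝ≥0∞) ^ ((1:ℝ) + pl) * 2 * (((2*N)*(2*B)) ^ pl * (Λ ^ pl)⁻¹) := by ring
        _ = (2:ℝ≥0∞) ^ ((1:ℝ) + pl) * 2 * ((((2*N)*(2*B)) / Λ) ^ pl) := by
            rw [ENNReal.div_rpow_of_nonneg _ _ hpl.le, div_eq_mul_inv]
        _ = (2:ℝ≥0∞) ^ ((1:ℝ) + pl) * 2 *
              ((4 / ENNReal.ofReal ((2:ℝ)^((12:ℝ)/pl))) ^ pl) := by
            rw [h4, hΛ', ENNReal.mul_div_mul_right _ _ hNB0 hNBt]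
        _ = (2:ℝ≥0∞) ^ ((1:ℝ) + pl) * 2 *
              ((4:ℝ≥0∞)^pl * ((2:ℝ≥0∞)^(12:ℝ))⁻¹) := by
            rw [ENNReal.div_rpow_of_nonneg _ _ hpl.le, hc₀pl, div_eq_mul_inv]
        _ ≤ (2:ℝ≥0∞) ^ ((2:ℝ)) * 2 * ((4:ℝ≥0∞)^(1:ℝ) * ((2:ℝ≥0∞)^(12:ℝ))⁻¹) := by
            refine mul_le_mul' (mul_le_mul'
              (ENNReal.rpow_le_rpow_of_exponent_le one_le_two (by linarith)) le_rfl)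
              (mul_le_mul' (ENNReal.rpow_le_rpow_of_exponent_le (by norm_num) hpl1) le_rfl)
        _ ≤ 4⁻¹ := by
            rw [ENNReal.rpow_one,
              (show ((2:ℝ)) = ((2:ℕ):ℝ) by norm_num), ENNReal.rpow_natCast,
              (show ((12:ℝ)) = ((12:ℕ):ℝ) by norm_num), ENNReal.rpow_natCast]
            have h128 : (2:ℝ≥0∞)^(2:ℕ) * 2 * (4 * ((2:ℝ≥0∞)^(12:ℕ))⁻¹) =
                32 / (2:ℝ≥0∞)^(12:ℕ) := by
              rw [div_eq_mul_inv]; ring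
            rw [h128, ENNReal.div_le_iff (by norm_num) (by norm_num)]
            rw [show ((2:ℝ≥0∞) ^ (12:ℕ)) = 4 * 1024 by norm_num]
            rw [← mul_assoc, ENNReal.inv_mul_cancel (by norm_num) (by norm_num), one_mul]
            norm_num
    -- put it together
    have hexpm : Measurable fun t : ℝ => (4:ℝ≥0∞)⁻¹ * ENNReal.ofReal (Real.exp (-t)) :=
      measurable_const.mul (measurable_ofReal.comp (Real.measurable_exp.comp measurable_neg))
    calc ∫⁻ t, lamf t ∂ν
        = (∫⁻ t, (2:ℝ≥0∞) ^ ((1:ℝ) + pl) * (Λ ^ pl)⁻¹ * (F0 t ^ pl * V t ^ pl) ∂ν) +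
            ∫⁻ t, 4⁻¹ * ENNReal.ofReal (Real.exp (-t)) ∂ν := lintegral_add_right _ hexpm
      _ = (2:ℝ≥0∞) ^ ((1:ℝ) + pl) * (Λ ^ pl)⁻¹ * (∫⁻ t, F0 t ^ pl * V t ^ pl ∂ν) +
            4⁻¹ * ∫⁻ t, ENNReal.ofReal (Real.exp (-t)) ∂ν := by
          rw [lintegral_const_mul' _ _ (ENNReal.mul_ne_top
              (ENNReal.rpow_lt_top_of_nonneg (by linarith) ENNReal.ofNat_ne_top).ne
              (by simpa using hΛpl0)),
            lintegral_const_mul' _ _ (by norm_num)]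
      _ ≤ 4⁻¹ + 4⁻¹ * 1 := by
          refine add_le_add ?_ (mul_le_mul_right ?_ _)
          · refine le_trans (mul_le_mul_right hT _) harith
          · exact lintegral_exp_neg_le_one
      _ ≤ 2⁻¹ := by
          rw [mul_one]
          have h4 : (4:ℝ≥0∞) = 2 * 2 := by norm_num
          have : (4:ℝ≥0∞)⁻¹ + 4⁻¹ = 2⁻¹ := by
            rw [h4, ENNReal.mul_inv (by norm_num) (by norm_num), ← add_mul,
              ENNReal.inv_two_add_inv_two, one_mul]
          rw [this]
  -- the modular condition
  have hlamod : ∀ᵐ t ∂ν, ∫⁻ x in Set.Ioi 0, (F (x, t) / lamf t) ^ θ x ≤ 1 := by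
    have hq0ae : ∀ᵐ x ∂ν, 0 < θ x := by
      filter_upwards [hb] with x hbx
      have hqx : 0 < q x := lt_of_lt_of_le hpl (hbx.1.trans hbx.2.1)
      exact div_pos hqx hpl
    refine Filter.Eventually.of_forall fun t => ?_
    by_cases hft : f t ≤ 0
    · -- trivial case: F0 t = 0
      have hF0t : F0 t = 0 := by rw [hF0def]; exact ENNReal.ofReal_eq_zero.mpr hft
      have hFz : ∀ x, F (x, t) = 0 := by
        intro x
        simp only [hFdef]
        by_cases hmem : ((x,t) : ℝ×ℝ) ∈ {z' : ℝ × ℝ | 0 < z'.1 ∧ z'.1 < z'.2}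
        · rw [Set.indicator_of_mem hmem]
          simp only
          rw [hF0t, ENNReal.zero_rpow_of_pos hpl]
          ring
        · rw [Set.indicator_of_notMem hmem]
      have hz : ∀ᵐ x ∂ν, (F (x, t) / lamf t) ^ θ x = 0 := by
        filter_upwards [hq0ae] with x hθx
        rw [hFz x, ENNReal.zero_div, ENNReal.zero_rpow_of_pos hθx]
      calc ∫⁻ x in Set.Ioi 0, (F (x, t) / lamf t) ^ θ x = ∫⁻ _x in Set.Ioi 0, (0:ℝ≥0∞) :=
            lintegral_congr_ae hz
        _ = 0 := lintegral_zero
        _ ≤ 1 := zero_le_one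
    push_neg at hft
    have hF0t0 : F0 t ≠ 0 := (ENNReal.ofReal_pos.mpr hft).ne'
    have hF0tt : F0 t ≠ ⊤ := ENNReal.ofReal_ne_top
    have hF0pl0 : F0 t ^ pl ≠ 0 := by
      simp only [ne_eq, ENNReal.rpow_eq_zero_iff, not_or]
      exact ⟨fun h => hF0t0 h.1, fun h => hF0tt h.1⟩
    have hF0plt : F0 t ^ pl ≠ ⊤ := (ENNReal.rpow_lt_top_of_nonneg hpl.le hF0tt).ne
    have h2F00 : (2 * F0 t ^ pl : ℝ≥0∞) ≠ 0 := mul_ne_zero two_ne_zero hF0pl0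
    have h2F0t : (2 * F0 t ^ pl : ℝ≥0∞) ≠ ⊤ := ENNReal.mul_ne_top ENNReal.ofNat_ne_top hF0plt
    by_cases hVt : V t = ⊤
    · -- lamf t = ⊤
      have h2plne : ((2:ℝ≥0∞) ^ ((1:ℝ) + pl) * (Λ ^ pl)⁻¹) ≠ 0 := by
        refine mul_ne_zero ?_ (ENNReal.inv_ne_zero.mpr hΛplt)
        simp only [ne_eq, ENNReal.rpow_eq_zero_iff, not_or]
        refine ⟨fun h => two_ne_zero h.1, fun h => ?_⟩
        exact ENNReal.ofNat_ne_top h.1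
      have hlt : lamf t = ⊤ := by
        simp only [hlamfdef]
        rw [hVt, ENNReal.top_rpow_of_pos hpl, ENNReal.mul_top hF0pl0,
          ENNReal.mul_top h2plne]
        rw [top_add]
      have hz : ∀ᵐ x ∂ν, (F (x, t) / lamf t) ^ θ x = 0 := by
        filter_upwards [hq0ae] with x hθx
        rw [hlt, div_top, ENNReal.zero_rpow_of_pos hθx]
      calc ∫⁻ x in Set.Ioi 0, (F (x, t) / lamf t) ^ θ x = ∫⁻ _x in Set.Ioi 0, (0:ℝ≥0∞) :=
            lintegral_congr_ae hz
        _ = 0 := lintegral_zero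
        _ ≤ 1 := zero_le_one
    · -- main case
      have hVplt : V t ^ pl ≠ ⊤ := (ENNReal.rpow_lt_top_of_nonneg hpl.le hVt).ne
      have hlamft : lamf t ≠ ⊤ := by
        simp only [hlamfdef]
        refine ENNReal.add_ne_top.mpr ⟨?_, ?_⟩
        · refine ENNReal.mul_ne_top (ENNReal.mul_ne_top ?_ ?_) (ENNReal.mul_ne_top hF0plt hVplt)
          · exact (ENNReal.rpow_lt_top_of_nonneg (by linarith) ENNReal.ofNat_ne_top).ne
          · exact ENNReal.inv_ne_top.mpr hΛpl0
        · exact ENNReal.mul_ne_top (by norm_num) ENNReal.ofReal_ne_top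
      set e : ℝ≥0∞ := (4:ℝ≥0∞)⁻¹ * ENNReal.ofReal (Real.exp (-t)) with hedef
      have he0 : e ≠ 0 :=
        (ENNReal.mul_pos (by norm_num) (ENNReal.ofReal_pos.mpr (Real.exp_pos _)).ne').ne'
      have het : e ≠ ⊤ := ENNReal.mul_ne_top (by norm_num) ENNReal.ofReal_ne_top
      set σ : ℝ≥0∞ := (Λ ^ pl * e / (2 * F0 t ^ pl)) ^ pl⁻¹ with hσdef
      have hbase0 : (Λ ^ pl * e / (2 * F0 t ^ pl)) ≠ 0 := by
        refine (ENNReal.div_pos (mul_ne_zero hΛpl0 he0) h2F0t).ne'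
      have hbaset : (Λ ^ pl * e / (2 * F0 t ^ pl)) ≠ ⊤ :=
        (ENNReal.div_lt_top (ENNReal.mul_ne_top hΛplt het) h2F00).ne
      have hσ0 : σ ≠ 0 := by
        simp only [hσdef, ne_eq, ENNReal.rpow_eq_zero_iff, not_or]
        exact ⟨fun h => hbase0 h.1, fun h => hbaset h.1⟩
      have hσt : σ ≠ ⊤ :=
        (ENNReal.rpow_lt_top_of_nonneg (by positivity) hbaset).ne
      set lam' : ℝ≥0∞ := 2 * V t + σ with hlam'def
      have hlam't : lam' ≠ ⊤ := ENNReal.add_ne_top.mpr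
        ⟨ENNReal.mul_ne_top ENNReal.ofNat_ne_top hVt, hσt⟩
      have hVlam' : V t < lam' := by
        rcases eq_or_ne (V t) 0 with hV0 | hV0
        · rw [hlam'def, hV0, mul_zero, zero_add]
          exact pos_iff_ne_zero.mpr hσ0
        · have h2V : V t < 2 * V t := by
            nth_rewrite 1 [← one_mul (V t)]
            exact ENNReal.mul_lt_mul_left hV0 hVt one_lt_two
          exact lt_of_lt_of_le h2V le_self_add
      have hlam'0 : lam' ≠ 0 := (lt_of_le_of_lt (zero_le) hVlam').ne'
      have hlam'pl0 : lam' ^ pl ≠ 0 := by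
        simp only [ne_eq, ENNReal.rpow_eq_zero_iff, not_or]
        exact ⟨fun h => hlam'0 h.1, fun h => hlam't h.1⟩
      have hlam'plt : lam' ^ pl ≠ ⊤ := (ENNReal.rpow_lt_top_of_nonneg hpl.le hlam't).ne
      -- key estimate on lam'^pl
      have hlam'pl : lam' ^ pl * (2 * F0 t ^ pl) ≤ Λ ^ pl * lamf t := by
        have hsub : lam' ^ pl ≤ (2 * V t) ^ pl + σ ^ pl :=
          ENNRpow_add_le_add_rpow' _ _ hpl.le hpl1
        have hσpl : σ ^ pl = Λ ^ pl * e / (2 * F0 t ^ pl) := by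
          rw [hσdef]
          exact rpow_inv_rpow _ hplne
        have h2 : (2:ℝ≥0∞) ^ pl * 2 = 2 ^ ((1:ℝ) + pl) := by
          rw [ENNReal.rpow_add 1 pl (by norm_num) (by norm_num), ENNReal.rpow_one, mul_comm]
        have hcancel : Λ ^ pl * ((2:ℝ≥0∞) ^ ((1:ℝ) + pl) * (Λ ^ pl)⁻¹ *
            (F0 t ^ pl * V t ^ pl)) =
            (2:ℝ≥0∞) ^ ((1:ℝ) + pl) * (F0 t ^ pl * V t ^ pl) := by
          calc Λ ^ pl * ((2:ℝ≥0∞) ^ ((1:ℝ) + pl) * (Λ ^ pl)⁻¹ * (F0 t ^ pl * V t ^ pl))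
              = (Λ ^ pl * (Λ ^ pl)⁻¹) * ((2:ℝ≥0∞) ^ ((1:ℝ) + pl) * (F0 t ^ pl * V t ^ pl)) := by
                ring
            _ = _ := by rw [ENNReal.mul_inv_cancel hΛpl0 hΛplt, one_mul]
        calc lam' ^ pl * (2 * F0 t ^ pl)
            ≤ ((2 * V t) ^ pl + σ ^ pl) * (2 * F0 t ^ pl) := mul_le_mul_left hsub _
          _ = (2 * V t) ^ pl * (2 * F0 t ^ pl) + Λ ^ pl * e := by
              rw [hσpl, add_mul, ENNReal.div_mul_cancel h2F00 h2F0t]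
          _ = Λ ^ pl * lamf t := by
              simp only [hlamfdef, hedef]
              rw [mul_add, hcancel]
              congr 1
              rw [ENNReal.mul_rpow_of_nonneg 2 (V t) hpl.le, ← h2]
              ring
      -- modular bound for the inner norm
      have hq0Ioo : ∀ᵐ x ∂(volume.restrict (Set.Ioo 0 t)), 0 ≤ q x := by
        refine ae_restrict_of_ae_restrict_of_subset Set.Ioo_subset_Ioi_self ?_
        rw [← hνdef]
        filter_upwards [hb] with x hbx
        linarith [hbx.1, lt_of_lt_of_le hpl hbx.1]
      have hmodK : ∫⁻ x in Set.Ioo 0 t,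
          (ENNReal.ofReal ((t - x) ^ ((pl - 1) / pl) * ω₂ x / x) / lam') ^ q x ≤ 1 :=
        modular_le_one_of_NE_lt hq0Ioo hVlam'
      -- pointwise comparison with the inner modular
      have hpt : ∀ᵐ x ∂ν, (F (x, t) / lamf t) ^ θ x ≤ (Set.Ioo 0 t).indicator
          (fun x => (ENNReal.ofReal ((t - x) ^ ((pl - 1) / pl) * ω₂ x / x) / lam') ^ q x)
            x := by
        filter_upwards [hb, hq0ae, ae_restrict_mem measurableSet_Ioi] with x hbx hθx hx0
        have hθx0 : (0:ℝ) ≤ θ x := hθx.le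
        have hplθ : pl * θ x = q x := by
          rw [hθdef]
          simp only
          rw [mul_comm, div_mul_cancel₀ _ hplne]
        by_cases hxt : x < t
        · rw [Set.indicator_of_mem (show x ∈ Set.Ioo 0 t from ⟨hx0, hxt⟩)]
          set K : ℝ≥0∞ := ENNReal.ofReal ((t - x) ^ ((pl - 1) / pl) * ω₂ x / x) with hKdef
          have htx : (0:ℝ) < t - x := sub_pos.mpr hxt
          have hxpos : (0:ℝ) < x := hx0
          have hofx0 : ENNReal.ofReal x ≠ 0 := (ENNReal.ofReal_pos.mpr hxpos).ne'
          have hKpl : K ^ pl = ENNReal.ofReal (t - x) ^ (pl - 1) *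
              (W₂ x / ENNReal.ofReal x) ^ pl := by
            rw [hKdef]
            have hsplit : ENNReal.ofReal ((t - x) ^ ((pl - 1) / pl) * ω₂ x / x) =
                ENNReal.ofReal ((t - x) ^ ((pl - 1) / pl)) * (W₂ x / ENNReal.ofReal x) := by
              rw [ENNReal.ofReal_div_of_pos hxpos,
                ENNReal.ofReal_mul (by positivity : (0:ℝ) ≤ (t - x) ^ ((pl - 1) / pl))]
              rw [hW₂def]
              simp only
              rw [mul_div_assoc]
            rw [hsplit, ENNReal.mul_rpow_of_nonneg _ _ hpl.le]
            congr 1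
            rw [← ENNReal.ofReal_rpow_of_pos htx, ← ENNReal.rpow_mul,
              div_mul_cancel₀ _ hplne]
          have hdd : W₂ x / (ENNReal.ofReal x * Λ) = (W₂ x / ENNReal.ofReal x) / Λ := by
            rw [div_eq_mul_inv, div_eq_mul_inv, div_eq_mul_inv,
              ENNReal.mul_inv (Or.inl hofx0) (Or.inl ENNReal.ofReal_ne_top)]
            ring
          have hFeq : F (x, t) = K ^ pl * (2 * F0 t ^ pl * (Λ ^ pl)⁻¹) := by
            simp only [hFdef]
            rw [Set.indicator_of_mem
              (show ((x,t) : ℝ × ℝ) ∈ {z' : ℝ × ℝ | 0 < z'.1 ∧ z'.1 < z'.2} from ⟨hx0, hxt⟩)]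
            simp only
            rw [hdd, ENNReal.div_rpow_of_nonneg _ _ hpl.le, hKpl, div_eq_mul_inv]
            ring
          have hlamf0t : lamf t ≠ 0 := (hlamf0 t).ne'
          have hineq : F (x, t) / lamf t ≤ (K / lam') ^ pl := by
            rw [ENNReal.div_rpow_of_nonneg K lam' hpl.le,
              ENNReal.div_le_iff hlamf0t hlamft, hFeq]
            have h1 : 2 * F0 t ^ pl * (Λ ^ pl)⁻¹ ≤ lamf t / lam' ^ pl := by
              rw [ENNReal.le_div_iff_mul_le (Or.inl hlam'pl0) (Or.inl hlam'plt)]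
              have h2 := ENNReal.div_le_div_right hlam'pl (Λ ^ pl)
              have h3 : Λ ^ pl * lamf t / Λ ^ pl = lamf t := by
                rw [mul_comm, mul_div_assoc, ENNReal.div_self hΛpl0 hΛplt, mul_one]
              rw [h3] at h2
              refine le_trans (le_of_eq ?_) h2
              rw [div_eq_mul_inv]
              ring
            calc K ^ pl * (2 * F0 t ^ pl * (Λ ^ pl)⁻¹)
                ≤ K ^ pl * (lamf t / lam' ^ pl) := mul_le_mul_right h1 _
              _ = K ^ pl / lam' ^ pl * lamf t := by
                  rw [div_eq_mul_inv, div_eq_mul_inv]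
                  ring
          calc (F (x, t) / lamf t) ^ θ x ≤ ((K / lam') ^ pl) ^ θ x :=
                ENNReal.rpow_le_rpow hineq hθx0
            _ = (K / lam') ^ q x := by rw [← ENNReal.rpow_mul, hplθ]
        · rw [Set.indicator_of_notMem (fun hc => hxt hc.2)]
          have hnm : ((x,t) : ℝ × ℝ) ∉ {z' : ℝ × ℝ | 0 < z'.1 ∧ z'.1 < z'.2} :=
            fun hc => hxt hc.2
          simp only [hFdef]
          rw [Set.indicator_of_notMem hnm, ENNReal.zero_div,
            ENNReal.zero_rpow_of_pos hθx]
      calc ∫⁻ x in Set.Ioi 0, (F (x, t) / lamf t) ^ θ x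
          ≤ ∫⁻ x in Set.Ioi 0, (Set.Ioo 0 t).indicator
              (fun x => (ENNReal.ofReal ((t - x) ^ ((pl - 1) / pl) * ω₂ x / x) / lam') ^ q x)
                x := lintegral_mono_ae hpt
        _ = ∫⁻ x in Set.Ioo 0 t,
              (ENNReal.ofReal ((t - x) ^ ((pl - 1) / pl) * ω₂ x / x) / lam') ^ q x := by
            rw [lintegral_indicator measurableSet_Ioo,
              Measure.restrict_restrict measurableSet_Ioo,
              (show Set.Ioo 0 t ∩ Set.Ioi (0:ℝ) = Set.Ioo 0 t from
                Set.inter_eq_left.mpr (fun x hx => hx.1))]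
        _ ≤ 1 := hmodK
  -- assemble
  have hθm : Measurable θ := hq.div measurable_const
  have hθae : ∀ᵐ x ∂ν, 1 ≤ θ x ∧ θ x ≤ 1 / pl := by
    filter_upwards [hb] with x hbx
    constructor
    · rw [hθdef, le_div_iff₀ hpl, one_mul]
      exact le_trans hbx.1 hbx.2.1
    · rw [hθdef]
      exact div_le_div_of_nonneg_right hbx.2.2 hpl.le |>.trans_eq rfl

  have hΘ1 : 1 ≤ 1 / pl := by
    rw [le_div_iff₀ hpl, one_mul]; exact hpl1
  have hmink := minkowski_modular (Set.Ioi 0) θ hθm (1 / pl) hθae hΘ1 F hFm ν lamf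
    (Filter.Eventually.of_forall hlamf0) hlamod hsum
  have hmod : ∫⁻ x in Set.Ioi 0,
      ((fun x => ENNReal.ofReal (ω₂ x) * HopDual f x) x / Λ) ^ q x ≤ 1 :=
    le_trans (lintegral_mono_ae key1) hmink
  exact NE_le_of_mem (pos_iff_ne_zero.mpr hΛ0) hmod

/-- Two-weight inequality for the dual Hardy operator on nonnegative decreasing
functions (Theorem 8). -/
theorem dual_hardy_inequality_decreasing
    (p q : ℝ → ℝ) (hp : Measurable p) (hq : Measurable q)
    (hpl : 0 < essInf p (volume.restrict (Set.Ioi (0 : ℝ))))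
    (hqu : essSup q (volume.restrict (Set.Ioi (0 : ℝ))) < 1)
    (hb : ∀ᵐ x ∂(volume.restrict (Set.Ioi (0 : ℝ))),
      essInf p (volume.restrict (Set.Ioi (0 : ℝ))) ≤ p x ∧ p x ≤ q x ∧
        q x ≤ essSup q (volume.restrict (Set.Ioi (0 : ℝ)))) :
    ∃ C : ℝ, 0 < C ∧
      ∀ ω₁ ω₂ : ℝ → ℝ, Measurable ω₁ → Measurable ω₂ →
        (∀ᵐ x ∂(volume.restrict (Set.Ioi (0 : ℝ))), 0 < ω₁ x) →
        (∀ᵐ x ∂(volume.restrict (Set.Ioi (0 : ℝ))), 0 < ω₂ x) →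
        ∀ f : ℝ → ℝ, Measurable f →
          (∀ x ∈ Set.Ioi (0 : ℝ), 0 ≤ f x) →
          (∀ x ∈ Set.Ioi (0 : ℝ), ∀ y ∈ Set.Ioi (0 : ℝ), x ≤ y → f y ≤ f x) →
          IpwR (Set.Ioi 0) p ω₁ f < ∞ →
          NE (Set.Ioi 0) q (fun x => ENNReal.ofReal (ω₂ x) * HopDual f x) ≤
            ENNReal.ofReal C * dualHardyWeightNorm p q ω₁ ω₂ *
              NE (Set.Ioi 0) p (fun x => ENNReal.ofReal (|f x| * ω₁ x)) := by
  have hplpos : 0 < plow p := hpl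
  have hμ0ne : volume.restrict (Set.Ioi (0:ℝ)) ≠ 0 := by
    intro h
    have h2 : volume.restrict (Set.Ioi (0:ℝ)) Set.univ = 0 := by rw [h]; rfl
    rw [Measure.restrict_apply_univ, Real.volume_Ioi] at h2
    exact ENNReal.top_ne_zero h2
  have hnb : (ae (volume.restrict (Set.Ioi (0:ℝ)))).NeBot := ae_neBot.mpr hμ0ne
  obtain ⟨x₀, hx₀⟩ := hb.exists
  have hpl1 : plow p ≤ 1 :=
    le_trans (hx₀.1.trans (hx₀.2.1.trans hx₀.2.2)) hqu.le
  refine ⟨2 ^ ((12:ℝ) / plow p), Real.rpow_pos_of_pos two_pos _, ?_⟩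
  intro ω₁ ω₂ hω₁m hω₂m hω₁ hω₂ f hfm hf0 hfdec hIf
  have hb' : ∀ᵐ x ∂(volume.restrict (Set.Ioi (0:ℝ))),
      plow p ≤ p x ∧ p x ≤ q x ∧ q x ≤ 1 := by
    filter_upwards [hb] with x hx
    exact ⟨hx.1, hx.2.1, hx.2.2.trans hqu.le⟩
  have hbpl : ∀ᵐ x ∂(volume.restrict (Set.Ioi (0:ℝ))), plow p ≤ p x := by
    filter_upwards [hb'] with x hx; exact hx.1
  set N : ℝ≥0∞ := NE (Set.Ioi 0) p (fun x => ENNReal.ofReal (|f x| * ω₁ x)) with hNdef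
  have hNt : N ≠ ⊤ := (NE_lt_top hIf hplpos hbpl).ne
  rcases eq_or_ne N 0 with hN0 | hN0
  · -- the function vanishes
    have hg0 : ∀ᵐ x ∂(volume.restrict (Set.Ioi (0:ℝ))),
        ENNReal.ofReal (|f x| * ω₁ x) = 0 :=
      ae_zero_of_NE_eq_zero (measurable_ofReal.comp (hfm.abs.mul hω₁m))
        measurableSet_Ioi hplpos hbpl hN0
    have hfz : ∀ x ∈ Set.Ioi (0:ℝ), f x = 0 := by
      intro x hx
      have hae : ∀ᵐ z ∂(volume.restrict (Set.Ioi (0:ℝ))),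
          ENNReal.ofReal (|f z| * ω₁ z) = 0 ∧ 0 < ω₁ z := hg0.and hω₁
      have hbad : volume.restrict (Set.Ioi (0:ℝ))
          {z | ¬(ENNReal.ofReal (|f z| * ω₁ z) = 0 ∧ 0 < ω₁ z)} = 0 := ae_iff.mp hae
      have hsub : ¬ (Set.Ioo 0 x ⊆
          {z | ¬(ENNReal.ofReal (|f z| * ω₁ z) = 0 ∧ 0 < ω₁ z)}) := by
        intro hsub
        have h1 : volume.restrict (Set.Ioi (0:ℝ)) (Set.Ioo 0 x) = 0 :=
          measure_mono_null hsub hbad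
        rw [Measure.restrict_apply measurableSet_Ioo,
          (show Set.Ioo 0 x ∩ Set.Ioi (0:ℝ) = Set.Ioo 0 x from
            Set.inter_eq_left.mpr (fun z hz => hz.1)), Real.volume_Ioo] at h1
        rw [ENNReal.ofReal_eq_zero] at h1
        have : (0:ℝ) < x := hx
        linarith
      obtain ⟨z, hzIoo, hz⟩ := Set.not_subset.mp hsub
      rw [Set.mem_setOf_eq, not_not] at hz
      have hfz0 : f z = 0 := by
        have h1 : |f z| * ω₁ z ≤ 0 := ENNReal.ofReal_eq_zero.mp hz.1
        have h2 : |f z| ≤ 0 := by nlinarith [abs_nonneg (f z), hz.2]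
        exact abs_eq_zero.mp (le_antisymm h2 (abs_nonneg _))
      have hle : f x ≤ f z := hfdec z hzIoo.1 x hx hzIoo.2.le
      exact le_antisymm (hfz0 ▸ hle) (hf0 x hx)
    have hHop : ∀ x ∈ Set.Ioi (0:ℝ), HopDual f x = 0 := by
      intro x hx
      rw [HopDual]
      have hz : ∫⁻ t in Set.Ioi x, ENNReal.ofReal (f t) = 0 := by
        have h1 : ∀ᵐ t ∂(volume.restrict (Set.Ioi x)), ENNReal.ofReal (f t) = 0 := by
          refine (ae_restrict_iff' measurableSet_Ioi).mpr
            (Filter.Eventually.of_forall fun t ht => ?_)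
          rw [hfz t (Set.mem_Ioi.mpr (lt_trans hx ht))]
          simp
        calc ∫⁻ t in Set.Ioi x, ENNReal.ofReal (f t)
            = ∫⁻ _t in Set.Ioi x, (0:ℝ≥0∞) := lintegral_congr_ae h1
          _ = 0 := lintegral_zero
      rw [hz, ENNReal.zero_div]
    have hLHS : NE (Set.Ioi 0) q (fun x => ENNReal.ofReal (ω₂ x) * HopDual f x) = 0 := by
      have hle : ∀ lam : ℝ≥0∞, 0 < lam →
          NE (Set.Ioi 0) q (fun x => ENNReal.ofReal (ω₂ x) * HopDual f x) ≤ lam := by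
        intro lam hlam
        refine sInf_le ⟨hlam, ?_⟩
        have hz : ∀ᵐ x ∂(volume.restrict (Set.Ioi (0:ℝ))),
            (ENNReal.ofReal (ω₂ x) * HopDual f x / lam) ^ q x = 0 := by
          filter_upwards [hb', ae_restrict_mem measurableSet_Ioi] with x hbx hx
          rw [hHop x hx, mul_zero, ENNReal.zero_div, ENNReal.zero_rpow_of_pos
            (lt_of_lt_of_le hplpos (hbx.1.trans hbx.2.1))]
        calc ∫⁻ x in Set.Ioi 0, (ENNReal.ofReal (ω₂ x) * HopDual f x / lam) ^ q x
            = ∫⁻ _x in Set.Ioi 0, (0:ℝ≥0∞) := lintegral_congr_ae hz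
          _ = 0 := lintegral_zero
          _ ≤ 1 := zero_le_one
      refine le_antisymm ?_ (zero_le)
      refine ENNReal.le_of_forall_pos_le_add fun ε hε _ => ?_
      rw [zero_add]
      exact hle _ (by exact_mod_cast hε)
    rw [hLHS]
    exact zero_le
  · rcases eq_or_ne (dualHardyWeightNorm p q ω₁ ω₂) ⊤ with hW | hW
    · rw [hW]
      have hC0 : ENNReal.ofReal (2 ^ ((12:ℝ) / plow p)) ≠ 0 := by
        rw [ne_eq, ENNReal.ofReal_eq_zero, not_le]
        positivity
      rw [ENNReal.mul_top hC0, ENNReal.top_mul hN0]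
      exact le_top
    · refine ENNReal.le_of_forall_pos_le_add fun ε hε hRt => ?_
      set C' : ℝ≥0∞ := ENNReal.ofReal (2 ^ ((12:ℝ) / plow p)) with hC'def
      have hC'0 : C' ≠ 0 := by
        rw [hC'def, ne_eq, ENNReal.ofReal_eq_zero, not_le]
        positivity
      have hC't : C' ≠ ⊤ := ENNReal.ofReal_ne_top
      have hε0 : (ε : ℝ≥0∞) ≠ 0 := by exact_mod_cast hε.ne'
      set δ : ℝ≥0∞ := (ε : ℝ≥0∞) / (C' * N) with hδdef
      have hδ0 : 0 < δ := ENNReal.div_pos hε0 (ENNReal.mul_ne_top hC't hNt)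
      have hδt : δ ≠ ⊤ :=
        (ENNReal.div_lt_top ENNReal.coe_ne_top (mul_ne_zero hC'0 hN0)).ne
      set B : ℝ≥0∞ := dualHardyWeightNorm p q ω₁ ω₂ + δ with hBdef
      have hWB : dualHardyWeightNorm p q ω₁ ω₂ < B := ENNReal.lt_add_right hW hδ0.ne'
      have hB0 : 0 < B := lt_of_lt_of_le hδ0 (self_le_add_left δ _)
      have hBt : B ≠ ⊤ := ENNReal.add_ne_top.mpr ⟨hW, hδt⟩
      have hmain := main_estimate p q ω₁ ω₂ f hp hq hω₁m hω₂m hfm hplpos hpl1 hb'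
        hω₁ hω₂ hf0 hfdec B hB0 hBt hWB (pos_iff_ne_zero.mpr hN0) hNt
      refine le_trans hmain (le_of_eq ?_)
      have hδcancel : C' * δ * N = (ε : ℝ≥0∞) := by
        rw [hδdef, div_eq_mul_inv]
        calc C' * ((ε:ℝ≥0∞) * (C' * N)⁻¹) * N
            = (ε:ℝ≥0∞) * ((C' * N) * (C' * N)⁻¹) := by ring
          _ = (ε:ℝ≥0∞) := by
              rw [ENNReal.mul_inv_cancel (mul_ne_zero hC'0 hN0)
                (ENNReal.mul_ne_top hC't hNt), mul_one]
      calc C' * B * N = C' * dualHardyWeightNorm p q ω₁ ω₂ * N + C' * δ * N := by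
            rw [hBdef]; ring
        _ = C' * dualHardyWeightNorm p q ω₁ ω₂ * N + (ε:ℝ≥0∞) := by rw [hδcancel]
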